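/- arXiv:math/0606037 — 6 statements merged into one kernel-verified Lean document; each statement's English description precedes it below -/
import Mathlib

section
/- Let μ be a nontrivial probability measure on the unit circle and let w0, w1 be distinct points of the unit circle such that the open arc (w0, w1) is disjoint from the support of μ. Then for every β on the unit circle and every n ≥ 1, the paraorthogonal polynomial Φ_n(z, dμ; β) = zΦ_{n−1}(z, dμ) − conj(β)·Φ_{n−1}^*(z, dμ) has at most one zero in the open arc (w0, w1). -/
open MeasureTheory Polynomial

/-- The open arc on the unit circle from `z` to `w`, counterclockwise. -/
def oArc (z w : ℂ) : Set ℂ :=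
  {ζ | ∃ s t : ℝ, 0 < t ∧ t < s ∧ s < 2 * Real.pi ∧
    w = z * Complex.exp (s * Complex.I) ∧ ζ = z * Complex.exp (t * Complex.I)}

/-- The (closed) support of a measure on `ℂ`: points all of whose open
neighborhoods have positive measure. -/
def measSupport (μ : Measure ℂ) : Set ℂ :=
  {x | ∀ s : Set ℂ, IsOpen s → x ∈ s → 0 < μ s}

section helpers
open Complex

lemma trig_key (θ t1 t2 : ℝ) :
    Complex.exp (-(↑(θ + (t1 + t2) / 2) : ℂ) * I) *
      ((Complex.exp (θ * I) - Complex.exp (t1 * I)) *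
        (Complex.exp (θ * I) - Complex.exp (t2 * I))) =
      ((2 * Real.cos (θ - (t1 + t2) / 2) - 2 * Real.cos ((t1 - t2) / 2) : ℝ) : ℂ) := by
  have hu : (Complex.exp ((θ:ℂ) * I)) ≠ 0 := Complex.exp_ne_zero _
  have hs : (Complex.exp ((((t1:ℂ) + t2) / 2) * I)) ≠ 0 := Complex.exp_ne_zero _
  have hs2 : Complex.exp ((((t1:ℂ) + t2) / 2) * I) * Complex.exp ((((t1:ℂ) + t2) / 2) * I)
      = Complex.exp ((t1:ℂ) * I) * Complex.exp ((t2:ℂ) * I) := by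
    rw [← Complex.exp_add, ← Complex.exp_add]; ring_nf
  have h1 : Complex.exp (-(↑(θ + (t1 + t2) / 2) : ℂ) * I)
      = (Complex.exp ((θ:ℂ) * I) * Complex.exp ((((t1:ℂ) + t2) / 2) * I))⁻¹ := by
    rw [← Complex.exp_add, ← Complex.exp_neg]; congr 1; push_cast; ring
  have e1 : ((θ:ℂ) - ((t1:ℂ) + t2) / 2) * I = (θ:ℂ) * I - ((((t1:ℂ) + t2) / 2)) * I := by ring
  have e3 : (-((θ:ℂ) - ((t1:ℂ) + t2) / 2)) * I = ((((t1:ℂ) + t2) / 2)) * I - (θ:ℂ) * I := by ring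
  have e2 : (((t1:ℂ) - t2) / 2) * I = (t1:ℂ) * I - ((((t1:ℂ) + t2) / 2)) * I := by ring
  have e4 : (-(((t1:ℂ) - t2) / 2)) * I = (t2:ℂ) * I - ((((t1:ℂ) + t2) / 2)) * I := by ring
  rw [h1]
  push_cast
  rw [Complex.two_cos, Complex.two_cos, e1, e3, e2, e4,
    Complex.exp_sub, Complex.exp_sub, Complex.exp_sub, Complex.exp_sub]
  set u := Complex.exp ((θ:ℂ) * I) with hud
  set a := Complex.exp ((t1:ℂ) * I) with had
  set b := Complex.exp ((t2:ℂ) * I) with hbd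
  set s := Complex.exp ((((t1:ℂ) + t2) / 2) * I) with hsd
  field_simp
  linear_combination (-1 : ℂ) * hs2

lemma cos_bound {δ x : ℝ} (h0 : 0 < δ) (hπ : δ < Real.pi) (h1 : δ < x)
    (h2 : x < 2 * Real.pi - δ) : Real.cos x < Real.cos δ := by
  rcases le_total x Real.pi with hx | hx
  · exact Real.cos_lt_cos_of_nonneg_of_le_pi h0.le hx h1
  · have h3 : Real.cos x = Real.cos (2 * Real.pi - x) := (Real.cos_two_pi_sub x).symm
    rw [h3]
    exact Real.cos_lt_cos_of_nonneg_of_le_pi h0.le (by linarith) (by linarith)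

lemma Fneg {t1 t2 s θ : ℝ} (h1 : 0 < t1) (h2 : t1 < s) (h3 : 0 < t2) (h4 : t2 < s)
    (h5 : s < 2 * Real.pi) (hne : t1 ≠ t2)
    (hθ : θ = 0 ∨ (s ≤ θ ∧ θ < 2 * Real.pi)) :
    2 * Real.cos (θ - (t1 + t2) / 2) - 2 * Real.cos ((t1 - t2) / 2) < 0 := by
  have hπ := Real.pi_pos
  set σ := (t1 + t2) / 2 with hσ
  set δ := |t1 - t2| / 2 with hδ
  have hδ0 : 0 < δ := by
    have : t1 - t2 ≠ 0 := sub_ne_zero.mpr hne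
    positivity
  have habs : |t1 - t2| < s := by
    rw [abs_sub_lt_iff]; constructor <;> linarith
  have hδπ : δ < Real.pi := by
    rw [hδ]; nlinarith
  have hσδmax : σ + δ < s := by
    rcases le_total t1 t2 with h | h
    · rw [hσ, hδ, _root_.abs_of_nonpos (by linarith), ]; linarith [_root_.abs_of_nonpos (show t1 - t2 ≤ 0 by linarith)]
    · rw [hσ, hδ, _root_.abs_of_nonneg (by linarith)]; linarith
  have hσδmin : 0 < σ - δ := by
    rcases le_total t1 t2 with h | h
    · rw [hσ, hδ, _root_.abs_of_nonpos (by linarith)]; linarith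
    · rw [hσ, hδ, _root_.abs_of_nonneg (by linarith)]; linarith
  have hcosδ : Real.cos ((t1 - t2) / 2) = Real.cos δ := by
    rw [hδ, ← Real.cos_abs ((t1 - t2)/2), abs_div]
    norm_num
  rw [hcosδ]
  have key : Real.cos (θ - σ) < Real.cos δ := by
    rcases hθ with rfl | ⟨ha, hb⟩
    · have : Real.cos (0 - σ) = Real.cos (2 * Real.pi - σ) := by
        rw [zero_sub, Real.cos_neg, Real.cos_two_pi_sub]
      rw [this]
      exact cos_bound hδ0 hδπ (by linarith) (by linarith)
    · exact cos_bound hδ0 hδπ (by linarith) (by linarith)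
  linarith

lemma exp_param {v : ℂ} (hv : ‖v‖ = 1) :
    ∃ θ : ℝ, 0 ≤ θ ∧ θ < 2 * Real.pi ∧ v = Complex.exp (θ * I) := by
  have h := Complex.norm_mul_exp_arg_mul_I v
  rw [hv] at h
  simp only [Complex.ofReal_one, one_mul] at h
  rcases le_or_gt 0 (Complex.arg v) with h0 | h0
  · exact ⟨Complex.arg v, h0, lt_of_le_of_lt (Complex.arg_le_pi v)
      (by linarith [Real.pi_pos]), h.symm⟩
  · refine ⟨Complex.arg v + 2 * Real.pi, by linarith [Complex.neg_pi_lt_arg v, Real.pi_pos], by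
      linarith, ?_⟩
    rw [Complex.ofReal_add, add_mul, Complex.exp_add]
    push_cast
    rw [Complex.exp_two_pi_mul_I, mul_one]
    exact h.symm

lemma exp_inj {s t : ℝ} (hs0 : 0 ≤ s) (hs2 : s < 2 * Real.pi) (ht0 : 0 ≤ t)
    (ht2 : t < 2 * Real.pi) (h : Complex.exp (s * I) = Complex.exp (t * I)) : s = t := by
  rw [Complex.exp_eq_exp_iff_exists_int] at h
  obtain ⟨k, hk⟩ := h
  have him : s = t + k * (2 * Real.pi) := by
    have := congrArg Complex.im hk
    simpa using this
  have hπ := Real.pi_pos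
  have hk0 : k = 0 := by
    rcases lt_trichotomy k 0 with h' | h' | h'
    · have : (k : ℝ) ≤ -1 := by exact_mod_cast (by omega : k ≤ -1)
      nlinarith
    · exact h'
    · have : (1 : ℝ) ≤ k := by exact_mod_cast h'
      nlinarith
  rw [hk0] at him; simpa using him

lemma measSupport_compl_null (μ : Measure ℂ) : μ (measSupport μ)ᶜ = 0 := by
  obtain ⟨B, hBc, -, hB⟩ := TopologicalSpace.exists_countable_basis ℂ
  set N := {b ∈ B | μ b = 0}
  have hsub : (measSupport μ)ᶜ ⊆ ⋃ b ∈ N, b := by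
    intro x hx
    simp only [Set.mem_compl_iff, measSupport, Set.mem_setOf_eq, not_forall] at hx
    obtain ⟨s, hso, hxs, hs0⟩ := hx
    have hs0' : μ s = 0 := by
      by_contra h
      exact hs0 (pos_iff_ne_zero.mpr h)
    obtain ⟨b, hbB, hxb, hbs⟩ := hB.exists_subset_of_mem_open hxs hso
    exact Set.mem_biUnion ⟨hbB, le_antisymm (le_trans (measure_mono hbs) hs0'.le) zero_le⟩ hxb
  refine measure_mono_null hsub ?_
  exact (measure_biUnion_null_iff (hBc.mono (Set.sep_subset _ _))).mpr fun b hb => hb.2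

lemma conj_eq_inv {z : ℂ} (hz : ‖z‖ = 1) : (starRingEnd ℂ) z = z⁻¹ := by
  have h1 : z * starRingEnd ℂ z = 1 := by
    rw [Complex.mul_conj, Complex.normSq_eq_norm_sq, hz]; norm_num
  exact eq_inv_of_mul_eq_one_right h1

lemma reflect_eval {P : Polynomial ℂ} {m : ℕ} (hP : P.natDegree ≤ m) {z : ℂ}
    (hz : ‖z‖ = 1) :
    (Polynomial.reflect m (P.map (starRingEnd ℂ))).eval z
      = z ^ m * (starRingEnd ℂ) (P.eval z) := by
  have hz0 : z ≠ 0 := by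
    intro h; rw [h] at hz; simp at hz
  have : Invertible (z⁻¹ : ℂ) := invertibleOfNonzero (inv_ne_zero hz0)
  have hQ : (P.map (starRingEnd ℂ)).natDegree ≤ m := Polynomial.natDegree_map_le.trans hP
  have key := Polynomial.eval₂_reflect_mul_pow (RingHom.id ℂ) z⁻¹ m (P.map (starRingEnd ℂ)) hQ
  rw [invOf_eq_inv, inv_inv] at key
  have hmapeval : Polynomial.eval₂ (RingHom.id ℂ) z⁻¹ (P.map (starRingEnd ℂ))
      = (starRingEnd ℂ) (P.eval z) := by
    rw [Polynomial.eval₂_map]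
    rw [RingHom.id_comp, ← conj_eq_inv hz, Polynomial.eval₂_at_apply (starRingEnd ℂ) z]
  rw [hmapeval] at key
  have hkey2 : (Polynomial.reflect m (P.map (starRingEnd ℂ))).eval z * (z⁻¹) ^ m
      = (starRingEnd ℂ) (P.eval z) := by
    rw [← key, Polynomial.eval]
  rw [inv_pow, mul_inv_eq_iff_eq_mul₀ (pow_ne_zero m hz0)] at hkey2
  rw [hkey2]; ring

lemma integrable_circ (μ : Measure ℂ) [IsFiniteMeasure μ]
    (hcirc : μ (Metric.sphere (0 : ℂ) 1)ᶜ = 0) {f : ℂ → ℂ} (hf : Continuous f) :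
    Integrable f μ := by
  obtain ⟨C, hC⟩ := (isCompact_sphere (0:ℂ) 1).exists_bound_of_continuousOn hf.continuousOn
  have hae : ∀ᵐ z ∂μ, z ∈ Metric.sphere (0:ℂ) 1 := by
    rw [MeasureTheory.ae_iff]
    exact hcirc
  refine ⟨hf.aestronglyMeasurable, MeasureTheory.HasFiniteIntegral.of_bounded (C := C) ?_⟩
  filter_upwards [hae] with z hz
  exact hC z hz

lemma natDegree_reflect_le' {R : Type*} [Semiring R] {q : Polynomial R} {m : ℕ}
    (h : q.natDegree ≤ m) : (Polynomial.reflect m q).natDegree ≤ m := by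
  rw [Polynomial.natDegree_le_iff_coeff_eq_zero]
  intro N hN
  rw [Polynomial.coeff_reflect]
  have hrev : Polynomial.revAt m N = N := by
    unfold Polynomial.revAt
    exact Polynomial.revAt_eq_self_of_lt hN
  rw [hrev]
  exact Polynomial.coeff_eq_zero_of_natDegree_lt (lt_of_le_of_lt h hN)

end helpers


/-- **Theorem 1.1** (Cantero–Moral–Velázquez, Golinskii). If `μ` is a nontrivial
probability measure on the unit circle and the open arc `(w0, w1)` is disjoint from
`supp(dμ)`, then for any `β ∈ ∂𝔻` and any `n ≥ 1`, the paraorthogonal polynomial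
`Φ_n(z, dμ; β) = z Φ_{n-1}(z) - conj(β) Φ_{n-1}^*(z)` has at most one zero in
`(w0, w1)`. -/
theorem popuc_at_most_one_zero_in_gap
    (μ : Measure ℂ) [IsProbabilityMeasure μ]
    (hcirc : μ (Metric.sphere (0 : ℂ) 1)ᶜ = 0)
    (hnontriv : (measSupport μ).Infinite)
    (Φ : ℕ → Polynomial ℂ)
    (hmonic : ∀ n, (Φ n).Monic)
    (hdeg : ∀ n, (Φ n).natDegree = n)
    (horth : ∀ n, ∀ k < n, ∫ z, (starRingEnd ℂ) (z ^ k) * (Φ n).eval z ∂μ = 0)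
    (w0 w1 : ℂ) (hw0 : ‖w0‖ = 1) (hw1 : ‖w1‖ = 1) (hne : w0 ≠ w1)
    (hdisj : oArc w0 w1 ∩ measSupport μ = ∅)
    (n : ℕ) (hn : 1 ≤ n) (β : ℂ) (hβ : ‖β‖ = 1) :
    {z ∈ oArc w0 w1 |
      (X * Φ (n - 1) - Polynomial.C ((starRingEnd ℂ) β) *
        Polynomial.reflect (n - 1) ((Φ (n - 1)).map (starRingEnd ℂ))).eval z = 0}.Subsingleton := by
  intro z1 hz1 z2 hz2
  by_contra hne12
  set m := n - 1 with hm
  set P := Φ m with hPdef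
  set Q : Polynomial ℂ := X * P - Polynomial.C ((starRingEnd ℂ) β) *
      Polynomial.reflect m (P.map (starRingEnd ℂ)) with hQdef
  obtain ⟨harc1, hroot1⟩ := hz1
  obtain ⟨harc2, hroot2⟩ := hz2
  obtain ⟨s1, t1, ht1pos, ht1lt, hs1lt, hw1eq, hz1eq⟩ := harc1
  obtain ⟨s2, t2, ht2pos, ht2lt, hs2lt, hw1eq', hz2eq⟩ := harc2
  have hw0ne : w0 ≠ 0 := by
    intro h; rw [h] at hw0; simp at hw0
  have hs12 : s1 = s2 := by
    refine exp_inj (by linarith) hs1lt (by linarith) hs2lt ?_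
    exact mul_left_cancel₀ hw0ne (hw1eq.symm.trans hw1eq')
  subst hs12
  have ht12 : t1 ≠ t2 := by
    intro h
    exact hne12 (by rw [hz1eq, hz2eq, h])
  have hconjw0 : (starRingEnd ℂ) w0 * w0 = 1 := by
    rw [mul_comm, Complex.mul_conj, Complex.normSq_eq_norm_sq, hw0]; norm_num
  -- degrees
  have hPm : P.Monic := hmonic m
  have hPdeg : P.natDegree = m := hdeg m
  have hXP : (X * P : Polynomial ℂ).Monic := monic_X.mul hPm
  have hXPdeg : (X * P : Polynomial ℂ).natDegree = m + 1 := by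
    rw [monic_X.natDegree_mul hPm, natDegree_X, hPdeg]; omega
  have hrdeg : (Polynomial.C ((starRingEnd ℂ) β) *
      Polynomial.reflect m (P.map (starRingEnd ℂ))).degree < (X * P : Polynomial ℂ).degree := by
    have h1 : (Polynomial.C ((starRingEnd ℂ) β) *
        Polynomial.reflect m (P.map (starRingEnd ℂ))).natDegree ≤ m :=
      (natDegree_C_mul_le _ _).trans (natDegree_reflect_le' (natDegree_map_le.trans hPdeg.le))
    calc (Polynomial.C ((starRingEnd ℂ) β) *
        Polynomial.reflect m (P.map (starRingEnd ℂ))).degree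
        ≤ (m : WithBot ℕ) := degree_le_of_natDegree_le h1
      _ < ((m + 1 : ℕ) : WithBot ℕ) := by exact_mod_cast Nat.lt_succ_self m
      _ = (X * P : Polynomial ℂ).degree := by rw [degree_eq_natDegree hXP.ne_zero, hXPdeg]
  have hQmonic : Q.Monic := hXP.sub_of_left hrdeg
  have hQdeg : Q.natDegree = m + 1 := by
    have h1 : Q.degree = (X * P : Polynomial ℂ).degree := degree_sub_eq_left_of_degree_lt hrdeg
    rw [← hXPdeg]
    exact natDegree_eq_of_degree_eq h1
  -- factorization
  have hd1 : (X - Polynomial.C z1) ∣ Q := dvd_iff_isRoot.mpr hroot1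
  have hd2 : (X - Polynomial.C z2) ∣ Q := dvd_iff_isRoot.mpr hroot2
  have hcop : IsCoprime (X - Polynomial.C z1) (X - Polynomial.C z2) :=
    isCoprime_X_sub_C_of_isUnit_sub ((sub_ne_zero.mpr hne12).isUnit)
  obtain ⟨p, hfac⟩ := hcop.mul_dvd hd1 hd2
  have hpne : p ≠ 0 := by
    rintro rfl; rw [mul_zero] at hfac; exact hQmonic.ne_zero hfac
  have hfacdeg : m + 1 = 2 + p.natDegree := by
    rw [← hQdeg, hfac, natDegree_mul (mul_ne_zero (X_sub_C_ne_zero z1) (X_sub_C_ne_zero z2)) hpne,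
      natDegree_mul (X_sub_C_ne_zero z1) (X_sub_C_ne_zero z2), natDegree_X_sub_C,
      natDegree_X_sub_C]
  set d := p.natDegree with hd
  have hdm : d + 1 = m := by omega
  -- integrability helper
  have hint : ∀ f : ℂ → ℂ, Continuous f → Integrable f μ :=
    fun f hf => integrable_circ μ hcirc hf
  have hc1 : ∀ j : ℕ, Continuous fun z : ℂ => (starRingEnd ℂ) (z ^ j) :=
    fun j => Complex.continuous_conj.comp (continuous_pow j)
  have haecirc : ∀ᵐ z ∂μ, ‖z‖ = 1 := by
    rw [MeasureTheory.ae_iff]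
    refine measure_mono_null ?_ hcirc
    intro z hz
    simp only [Set.mem_setOf_eq] at hz
    simp only [Set.mem_compl_iff, mem_sphere_zero_iff_norm]
    exact hz
  have haesupp : ∀ᵐ z ∂μ, z ∈ measSupport μ := by
    rw [MeasureTheory.ae_iff]
    exact measSupport_compl_null μ
  -- paraorthogonality
  have hpara : ∀ k : ℕ, 1 ≤ k → k ≤ m → ∫ z, (starRingEnd ℂ) (z ^ k) * Q.eval z ∂μ = 0 := by
    intro k hk1 hkm
    have hptws : ∀ᵐ z ∂μ, (starRingEnd ℂ) (z ^ k) * Q.eval z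
        = (starRingEnd ℂ) (z ^ (k - 1)) * P.eval z
          - (starRingEnd ℂ) β *
            (starRingEnd ℂ) ((starRingEnd ℂ) (z ^ (m - k)) * P.eval z) := by
      filter_upwards [haecirc] with z hz
      have hz0 : z ≠ 0 := fun h => by rw [h] at hz; simp at hz
      have hinv : (starRingEnd ℂ) z = z⁻¹ := conj_eq_inv hz
      rw [hQdef]
      simp only [eval_sub, eval_mul, eval_X, eval_C]
      rw [reflect_eval hPdeg.le hz]
      simp only [map_pow, map_mul, Complex.conj_conj]
      rw [hinv]
      have e5 : (z⁻¹) ^ k * z = (z⁻¹) ^ (k - 1) := by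
        have hk : k = (k - 1) + 1 := (Nat.succ_pred_eq_of_pos hk1).symm
        rw [hk]
        rw [pow_succ]
        field_simp
        ring
        congr 1; omega
      have e6 : (z⁻¹) ^ k * z ^ m = z ^ (m - k) := by
        have hmk : m = (m - k) + k := (Nat.sub_add_cancel hkm).symm
        rw [hmk, pow_add, inv_pow]
        field_simp
        congr 1; omega
      have e7 : ((z ^ (k-1))⁻¹ : ℂ) = (z⁻¹) ^ (k-1) := by rw [inv_pow]
      rw [inv_pow] at e5 e6
      linear_combination (P.eval z) * e5 -
        (starRingEnd ℂ) β * (starRingEnd ℂ) (P.eval z) * e6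
    rw [integral_congr_ae hptws]
    have hi1 : Integrable (fun z => (starRingEnd ℂ) (z ^ (k - 1)) * P.eval z) μ :=
      hint _ ((hc1 (k - 1)).mul (Polynomial.continuous P))
    have hi2 : Integrable (fun z => (starRingEnd ℂ) β *
        (starRingEnd ℂ) ((starRingEnd ℂ) (z ^ (m - k)) * P.eval z)) μ :=
      hint _ (continuous_const.mul (Complex.continuous_conj.comp
        ((hc1 (m - k)).mul (Polynomial.continuous P))))
    rw [integral_sub hi1 hi2]
    have h01 : ∫ z, (starRingEnd ℂ) (z ^ (k - 1)) * P.eval z ∂μ = 0 :=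
      horth m (k - 1) (by omega)
    have h02 : ∫ z, (starRingEnd ℂ) (z ^ (m - k)) * P.eval z ∂μ = 0 :=
      horth m (m - k) (by omega)
    rw [h01, integral_const_mul, integral_conj, h02]
    simp
  -- zero integral
  have hzero : ∫ z, (starRingEnd ℂ) (z * p.eval z) * Q.eval z ∂μ = 0 := by
    have hrep : ∀ z : ℂ, (starRingEnd ℂ) (z * p.eval z) * Q.eval z
        = ∑ k ∈ Finset.range (d + 1), (starRingEnd ℂ) (p.coeff k) *
            ((starRingEnd ℂ) (z ^ (k + 1)) * Q.eval z) := by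
      intro z
      have hps : z * p.eval z = ∑ k ∈ Finset.range (d + 1), p.coeff k * z ^ (k + 1) := by
        conv_lhs => rw [eval_eq_sum_range]
        rw [Finset.mul_sum]
        exact Finset.sum_congr rfl fun i _ => by ring
      rw [hps, map_sum, Finset.sum_mul]
      exact Finset.sum_congr rfl fun i _ => by rw [map_mul]; ring
    rw [integral_congr_ae (Filter.Eventually.of_forall hrep)]
    rw [integral_finset_sum _ (fun k _ =>
      hint (fun z => (starRingEnd ℂ) (p.coeff k) * ((starRingEnd ℂ) (z ^ (k + 1)) * Q.eval z))
        (continuous_const.mul ((hc1 (k + 1)).mul (Polynomial.continuous Q))))]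
    refine Finset.sum_eq_zero fun k hk => ?_
    rw [integral_const_mul, hpara (k + 1) (by omega) (by
      simp only [Finset.mem_range] at hk; omega), mul_zero]
  -- gamma, F, g
  set σ : ℝ := (t1 + t2) / 2 with hσdef
  set γ : ℂ := (starRingEnd ℂ) w0 * Complex.exp (-(σ : ℂ) * Complex.I) with hγdef
  set F : ℝ → ℝ := fun θ => 2 * Real.cos (θ - σ) - 2 * Real.cos ((t1 - t2) / 2) with hFdef
  have hpoint : ∀ θ : ℝ, γ * ((starRingEnd ℂ) (w0 * Complex.exp (θ * Complex.I)) *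
      ((w0 * Complex.exp (θ * Complex.I) - z1) * (w0 * Complex.exp (θ * Complex.I) - z2)))
      = ((F θ : ℝ) : ℂ) := by
    intro θ
    rw [hz1eq, hz2eq]
    have hconjz : (starRingEnd ℂ) (w0 * Complex.exp (θ * Complex.I))
        = (starRingEnd ℂ) w0 * Complex.exp (-(θ : ℂ) * Complex.I) := by
      rw [map_mul]
      congr 1
      rw [← Complex.exp_conj]
      congr 1
      simp only [map_mul, Complex.conj_I, Complex.conj_ofReal]
      ring
    rw [hconjz]
    have hkey := trig_key θ t1 t2
    have hexp : Complex.exp (-(σ : ℂ) * Complex.I) * Complex.exp (-(θ : ℂ) * Complex.I)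
        = Complex.exp (-(↑(θ + (t1 + t2) / 2) : ℂ) * Complex.I) := by
      rw [← Complex.exp_add]
      congr 1
      rw [hσdef]
      push_cast
      ring
    rw [hFdef]
    rw [show ((2 * Real.cos (θ - σ) - 2 * Real.cos ((t1 - t2) / 2) : ℝ) : ℂ)
      = ((2 * Real.cos (θ - (t1 + t2) / 2) - 2 * Real.cos ((t1 - t2) / 2) : ℝ) : ℂ) by rw [hσdef]]
    rw [← hkey, ← hexp]
    linear_combination ((Complex.exp (-(σ : ℂ) * Complex.I) * Complex.exp (-(θ : ℂ) * Complex.I) *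
      ((Complex.exp (θ * Complex.I) - Complex.exp (t1 * Complex.I)) *
        (Complex.exp (θ * Complex.I) - Complex.exp (t2 * Complex.I)))) *
      ((starRingEnd ℂ) w0 * w0 + 1)) * hconjw0
  set g : ℂ → ℝ := fun z => (γ * ((starRingEnd ℂ) (z * p.eval z) * Q.eval z)).re with hgdef
  have hγcont : Continuous fun z : ℂ => γ * ((starRingEnd ℂ) (z * p.eval z) * Q.eval z) :=
    continuous_const.mul ((Complex.continuous_conj.comp
      (continuous_id.mul (Polynomial.continuous p))).mul (Polynomial.continuous Q))
  have hgcont : Continuous g := Complex.continuous_re.comp hγcont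
  have hsupp_sphere : ∀ z ∈ measSupport μ, ‖z‖ = 1 := by
    intro z hzs
    by_contra h
    have hzmem : z ∈ (Metric.sphere (0 : ℂ) 1)ᶜ := by
      simp only [Set.mem_compl_iff, mem_sphere_zero_iff_norm]
      exact h
    have := hzs _ Metric.isClosed_sphere.isOpen_compl hzmem
    rw [hcirc] at this
    exact lt_irrefl 0 this
  have hQeval : ∀ z : ℂ, Q.eval z = (z - z1) * (z - z2) * p.eval z := by
    intro z
    rw [hfac, eval_mul, eval_mul, eval_sub, eval_sub, eval_X, eval_C, eval_C]
  have hgneg : ∀ z ∈ measSupport μ, g z ≤ 0 ∧ (p.eval z ≠ 0 → g z < 0) := by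
    intro z hzs
    have hz : ‖z‖ = 1 := hsupp_sphere z hzs
    have habsv : ‖(starRingEnd ℂ) w0 * z‖ = 1 := by
      rw [norm_mul, Complex.norm_conj, hw0, hz]; norm_num
    obtain ⟨θ, hθ0, hθ2, hvθ⟩ := exp_param habsv
    have hzeq : z = w0 * Complex.exp (θ * Complex.I) := by
      calc z = (starRingEnd ℂ) w0 * w0 * z := by rw [hconjw0]; ring
        _ = w0 * ((starRingEnd ℂ) w0 * z) := by ring
        _ = w0 * Complex.exp (θ * Complex.I) := by rw [← hvθ]
    have hθnot : θ = 0 ∨ (s1 ≤ θ ∧ θ < 2 * Real.pi) := by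
      by_contra hcon
      push_neg at hcon
      obtain ⟨hθne, hcon2⟩ := hcon
      have hθpos : 0 < θ := lt_of_le_of_ne hθ0 (Ne.symm hθne)
      have hθlt : θ < s1 := by
        by_contra h
        exact absurd hθ2 (not_lt.mpr (hcon2 (not_lt.mp h)))
      have hzarc : z ∈ oArc w0 w1 := ⟨s1, θ, hθpos, hθlt, hs1lt, hw1eq, hzeq⟩
      exact Set.eq_empty_iff_forall_notMem.mp hdisj z ⟨hzarc, hzs⟩
    have hFneg : F θ < 0 := Fneg ht1pos ht1lt ht2pos ht2lt hs1lt ht12 hθnot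
    have hcalc : γ * ((starRingEnd ℂ) (z * p.eval z) * Q.eval z)
        = ((Complex.normSq (p.eval z) * F θ : ℝ) : ℂ) := by
      rw [hQeval z, map_mul]
      have h1 := hpoint θ
      rw [← hzeq] at h1
      calc γ * (((starRingEnd ℂ) z * (starRingEnd ℂ) (p.eval z)) *
            ((z - z1) * (z - z2) * p.eval z))
          = ((starRingEnd ℂ) (p.eval z) * p.eval z) *
            (γ * ((starRingEnd ℂ) z * ((z - z1) * (z - z2)))) := by ring
        _ = ((starRingEnd ℂ) (p.eval z) * p.eval z) * ((F θ : ℝ) : ℂ) := by rw [h1]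
        _ = _ := by
            rw [mul_comm ((starRingEnd ℂ) (p.eval z)) (p.eval z), Complex.mul_conj]
            push_cast
            ring
    have hgz : g z = Complex.normSq (p.eval z) * F θ := by
      show (γ * ((starRingEnd ℂ) (z * p.eval z) * Q.eval z)).re = _
      rw [hcalc]
      exact Complex.ofReal_re _
    constructor
    · rw [hgz]
      exact mul_nonpos_of_nonneg_of_nonpos (Complex.normSq_nonneg _) hFneg.le
    · intro hp
      rw [hgz]
      exact mul_neg_of_pos_of_neg (Complex.normSq_pos.mpr hp) hFneg
  have hgint : Integrable g μ := (hint _ hγcont).re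
  have hgzero : ∫ z, g z ∂μ = 0 := by
    have h1 : ∫ z, γ * ((starRingEnd ℂ) (z * p.eval z) * Q.eval z) ∂μ = 0 := by
      rw [integral_const_mul, hzero, mul_zero]
    have h2 := integral_re (hint _ hγcont)
    rw [h1] at h2
    simpa [hgdef] using h2
  have hae0 : (fun z => -(g z)) =ᵐ[μ] 0 := by
    refine (integral_eq_zero_iff_of_nonneg_ae ?_ hgint.neg).mp ?_
    · filter_upwards [haesupp] with z hzs
      simp only [Pi.zero_apply, Pi.neg_apply, neg_nonneg]
      exact (hgneg z hzs).1
    · simp only [Pi.neg_apply]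
      rw [integral_neg, hgzero, neg_zero]
  have hrootsfin : {x : ℂ | p.IsRoot x}.Finite := p.finite_setOf_isRoot hpne
  obtain ⟨x, hxsupp, hxroot⟩ := (hnontriv.diff hrootsfin).nonempty
  have hgx : g x < 0 := (hgneg x hxsupp).2 (by simpa [Polynomial.IsRoot] using hxroot)
  have hUopen : IsOpen (g ⁻¹' Set.Iio 0) := isOpen_Iio.preimage hgcont
  have hμU : 0 < μ (g ⁻¹' Set.Iio 0) := hxsupp _ hUopen hgx
  have hUnull : μ (g ⁻¹' Set.Iio 0) = 0 := by
    have h := hae0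
    rw [Filter.EventuallyEq, MeasureTheory.ae_iff] at h
    refine measure_mono_null ?_ h
    intro z hz
    simp only [Set.mem_setOf_eq, Pi.zero_apply, Pi.neg_apply]
    simp only [Set.mem_preimage, Set.mem_Iio] at hz
    intro hc
    rw [neg_eq_zero] at hc
    exact absurd hc (ne_of_lt hz)
  exact absurd hUnull (ne_of_gt hμU)
end

section
/- Let U and V be unitary operators on a complex Hilbert space H such that U − V has rank one. Then there exist a unit vector φ ∈ H orthogonal to the kernel of U − V and a point λ on the unit circle such that Vφ = λ·Uφ and V − U = (λ − 1)·⟨φ, ·⟩Uφ, i.e., Vx = Ux + (λ − 1)·⟨φ, x⟩·Uφ for all x ∈ H. -/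
open scoped InnerProductSpace

private lemma unitary_inner_map {H : Type*} [NormedAddCommGroup H] [InnerProductSpace ℂ H]
    [CompleteSpace H] {U : H →L[ℂ] H} (hU : U ∈ unitary (H →L[ℂ] H)) (x y : H) :
    ⟪U x, U y⟫_ℂ = ⟪x, y⟫_ℂ := by
  have h1 : star U * U = 1 := hU.1
  have : ⟪x, (ContinuousLinearMap.adjoint U) (U y)⟫_ℂ = ⟪U x, U y⟫_ℂ :=
    ContinuousLinearMap.adjoint_inner_right U x (U y)
  rw [← this]
  have h2 : (ContinuousLinearMap.adjoint U) (U y) = y := by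
    have := congrArg (fun (W : H →L[ℂ] H) => W y) h1
    simpa [ContinuousLinearMap.star_eq_adjoint, ContinuousLinearMap.mul_apply] using this
  rw [h2]

private lemma unitary_norm_map {H : Type*} [NormedAddCommGroup H] [InnerProductSpace ℂ H]
    [CompleteSpace H] {U : H →L[ℂ] H} (hU : U ∈ unitary (H →L[ℂ] H)) (x : H) :
    ‖U x‖ = ‖x‖ := by
  have h := unitary_inner_map hU x x
  have h2 : ‖U x‖ ^ 2 = ‖x‖ ^ 2 := by
    rw [← inner_self_eq_norm_sq (𝕜 := ℂ), ← inner_self_eq_norm_sq (𝕜 := ℂ), h]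
  nlinarith [norm_nonneg (U x), norm_nonneg x]

/-- If `U` and `V` are unitaries on a Hilbert space and `U - V` has rank one, then
there are a unit vector `φ ⊥ ker(U - V)` and `λ ∈ ∂𝔻` with `Vφ = λ Uφ` and
`V - U = (λ - 1)⟨φ, ·⟩Uφ`. -/
theorem rankOne_unitary_perturbation_form
    {H : Type*} [NormedAddCommGroup H] [InnerProductSpace ℂ H] [CompleteSpace H]
    (U V : H →L[ℂ] H)
    (hU : U ∈ unitary (H →L[ℂ] H)) (hV : V ∈ unitary (H →L[ℂ] H))
    (hrank : Module.finrank ℂ (LinearMap.range ((U - V : H →L[ℂ] H) : H →ₗ[ℂ] H)) = 1) :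
    ∃ (φ : H) (lam : ℂ), ‖φ‖ = 1 ∧ φ ∈ (LinearMap.ker ((U - V : H →L[ℂ] H) : H →ₗ[ℂ] H))ᗮ ∧
      ‖lam‖ = 1 ∧ V φ = lam • U φ ∧
      ∀ x : H, V x - U x = (lam - 1) • (inner ℂ φ x : ℂ) • U φ := by
  set T : H →L[ℂ] H := U - V with hT
  -- a spanning vector of the range
  obtain ⟨⟨χ, hχmem⟩, hχne, hχspan⟩ := (finrank_eq_one_iff' ).mp hrank
  have hχ0 : χ ≠ 0 := fun h => hχne (Subtype.ext h)
  -- the representing functional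
  set h : H →L[ℂ] ℂ := ((‖χ‖ : ℂ) ^ 2)⁻¹ • ((innerSL ℂ χ).comp T) with hh
  have hkey : ∀ x : H, T x = h x • χ := by
    intro x
    obtain ⟨c, hc⟩ := hχspan ⟨T x, LinearMap.mem_range_self _ x⟩
    have hc' : c • χ = T x := congrArg Subtype.val hc
    have hinner : (innerSL ℂ χ) (T x) = c * (‖χ‖ : ℂ) ^ 2 := by
      rw [← hc']
      simp [inner_smul_right, inner_self_eq_norm_sq_to_K]
    have hn : ((‖χ‖ : ℂ) ^ 2) ≠ 0 :=
      pow_ne_zero 2 (by exact_mod_cast norm_ne_zero_iff.mpr hχ0)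
    have : h x = c := by
      simp only [hh, ContinuousLinearMap.smul_apply, ContinuousLinearMap.comp_apply, hinner, smul_eq_mul]
      rw [mul_comm c, inv_mul_cancel_left₀ hn]
    rw [this, hc']
  -- Riesz representation
  set φ₀ : H := (InnerProductSpace.toDual ℂ H).symm h with hφ₀
  have hφ₀x : ∀ x : H, ⟪φ₀, x⟫_ℂ = h x := fun x => InnerProductSpace.toDual_symm_apply
  obtain ⟨x₀, hx₀⟩ := hχmem
  have hhx₀ : h x₀ = 1 := by
    have := hkey x₀
    rw [show T x₀ = χ from hx₀] at this
    have h1 : (1 : ℂ) • χ = h x₀ • χ := by simpa using this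
    have := smul_left_injective ℂ hχ0 h1.symm
    simpa using this
  have hφ₀ne : φ₀ ≠ 0 := by
    intro hzero
    have := hφ₀x x₀
    rw [hzero, hhx₀] at this
    simp at this
  set r : ℝ := ‖φ₀‖ with hr
  have hrpos : (0:ℝ) < r := norm_pos_iff.mpr hφ₀ne
  have hrne : (r : ℂ) ≠ 0 := by exact_mod_cast hrpos.ne'
  set φ : H := (r : ℂ)⁻¹ • φ₀ with hφdef
  have hφnorm : ‖φ‖ = 1 := by
    rw [hφdef, norm_smul]
    simp [hr, norm_inv]
    field_simp
  have hφinner : ∀ x : H, ⟪φ, x⟫_ℂ = (r : ℂ)⁻¹ * ⟪φ₀, x⟫_ℂ := by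
    intro x
    rw [hφdef, inner_smul_left]
    congr 1
    simp [Complex.conj_inv, Complex.conj_ofReal]
  set χ' : H := (r : ℂ) • χ with hχ'
  have hχ'ne : χ' ≠ 0 := smul_ne_zero hrne hχ0
  have hkey' : ∀ x : H, T x = ⟪φ, x⟫_ℂ • χ' := by
    intro x
    rw [hkey x, ← hφ₀x x, hφinner x, hχ', smul_smul]
    congr 1
    field_simp
  -- kernel characterization
  have hker : ∀ x : H, x ∈ LinearMap.ker (T : H →ₗ[ℂ] H) ↔ ⟪φ, x⟫_ℂ = 0 := by
    intro x
    constructor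
    · intro hx
      have hx' : T x = 0 := hx
      rw [hkey' x] at hx'
      rcases smul_eq_zero.mp hx' with h1 | h1
      · exact h1
      · exact absurd h1 hχ'ne
    · intro hx
      show T x = 0
      rw [hkey' x, hx, zero_smul]
  have hφmem : φ ∈ (LinearMap.ker (T : H →ₗ[ℂ] H))ᗮ := by
    rw [Submodule.mem_orthogonal]
    intro v hv
    have := (hker v).mp hv
    rw [← inner_conj_symm]
    simp [this]
  have hφφ : ⟪φ, φ⟫_ℂ = 1 := by
    rw [inner_self_eq_norm_sq_to_K, hφnorm]
    norm_num
  have hTφ : T φ = χ' := by rw [hkey' φ, hφφ, one_smul]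
  -- show χ' is a multiple of U φ
  have hUVinner := unitary_inner_map hU
  have hVVinner := unitary_inner_map hV
  set z : H := (ContinuousLinearMap.adjoint U) (T φ) with hz
  have hUz : U z = T φ := by
    have h2 : U * star U = 1 := hU.2
    have := congrArg (fun (W : H →L[ℂ] H) => W (T φ)) h2
    simpa [ContinuousLinearMap.star_eq_adjoint, ContinuousLinearMap.mul_apply] using this
  have hzorth : ∀ y : H, ⟪φ, y⟫_ℂ = 0 → ⟪y, z⟫_ℂ = 0 := by
    intro y hy
    have hyk : T y = 0 := (hker y).mpr hy
    have hUyVy : U y = V y := by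
      have h0 : U y - V y = 0 := hyk
      exact sub_eq_zero.mp h0
    rw [hz, ContinuousLinearMap.adjoint_inner_right]
    have : T φ = U φ - V φ := rfl
    rw [this, inner_sub_right]
    rw [hUVinner y φ, hUyVy, hVVinner y φ]
    have hy' : ⟪y, φ⟫_ℂ = 0 := by rw [← inner_conj_symm, hy]; simp
    rw [hy', sub_zero]
  have hzmem : z ∈ Submodule.span ℂ {φ} := by
    have hcc : (Submodule.span ℂ {φ})ᗮᗮ = Submodule.span ℂ {φ} :=
      Submodule.orthogonal_orthogonal _
    rw [← hcc, Submodule.mem_orthogonal]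
    intro w hw
    apply hzorth
    exact hw φ (Submodule.mem_span_singleton_self φ)
  obtain ⟨c, hc⟩ := Submodule.mem_span_singleton.mp hzmem
  have hχ'c : χ' = c • U φ := by
    rw [← hTφ, ← hUz, ← hc, map_smul]
  refine ⟨φ, 1 - c, hφnorm, hφmem, ?_, ?_, ?_⟩
  · -- modulus one
    have hVφ : V φ = (1 - c) • U φ := by
      have h3 : U φ - V φ = c • U φ := by rw [← hχ'c, ← hTφ]; rfl
      linear_combination (norm := module) -h3
    have h1 : ‖V φ‖ = 1 := by rw [unitary_norm_map hV, hφnorm]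
    have h2 : ‖U φ‖ = 1 := by rw [unitary_norm_map hU, hφnorm]
    rw [hVφ, norm_smul, h2, mul_one] at h1
    exact h1
  · have h3 : U φ - V φ = c • U φ := by rw [← hχ'c, ← hTφ]; rfl
    linear_combination (norm := module) -h3
  · intro x
    have h1 : U x - V x = ⟪φ, x⟫_ℂ • χ' := hkey' x
    rw [hχ'c] at h1
    have : V x - U x = -(⟪φ, x⟫_ℂ • c • U φ) := by
      rw [← h1]; abel
    rw [this]
    module
end

section
/- Let f be a Schur function (an analytic function on the open unit disc with |f(z)| < 1 there) that extends analytically to a neighborhood of an open arc I of the unit circle with |f(z)| = 1 for all z ∈ I. Then any continuous branch of the argument θ ↦ Arg f(e^{iθ}) is strictly monotone increasing on I. -/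
open Complex Set Filter Topology

lemma expI_ne_expI {s t : ℝ} (h1 : s < t) (h2 : t - s < 2 * Real.pi) :
    Complex.exp (↑t * I) ≠ Complex.exp (↑s * I) := by
  intro h
  have h1' : Complex.exp ((↑(t - s)) * I) = 1 := by
    push_cast
    rw [sub_mul, Complex.exp_sub, h, div_self (Complex.exp_ne_zero _)]
  obtain ⟨n, hn⟩ := Complex.exp_eq_one_iff.mp h1'
  have hts : t - s = n * (2 * Real.pi) := by
    have := congrArg Complex.im hn
    simpa using this
  have hπ := Real.pi_pos
  have hn0 : (0:ℝ) < n := by nlinarith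
  have hn1 : (n:ℝ) < 1 := by nlinarith
  have h0 : 0 < n := by exact_mod_cast hn0
  have h1'' : n < 1 := by exact_mod_cast hn1
  omega

lemma hasDerivAt_expI (θ : ℝ) :
    HasDerivAt (fun t : ℝ => Complex.exp (↑t * I)) (Complex.exp (↑θ * I) * I) θ := by
  have h1 : HasDerivAt (fun t : ℝ => (↑t * I : ℂ)) I θ := by
    simpa using Complex.ofRealCLM.hasDerivAt.mul_const I
  simpa using h1.cexp

set_option maxHeartbeats 1000000 in
lemma schur_key (f : ℂ → ℂ) (S : Set ℂ) (hSopen : IsOpen S)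
    (hball : Metric.ball (0 : ℂ) 1 ⊆ S)
    (a b : ℝ)
    (harc : ∀ θ ∈ Ioo a b, Complex.exp (θ * I) ∈ S)
    (hf : AnalyticOn ℂ f S)
    (hSchur : ∀ z ∈ Metric.ball (0 : ℂ) 1, ‖f z‖ < 1)
    (hmod : ∀ θ ∈ Ioo a b, ‖f (Complex.exp (θ * I))‖ = 1)
    (A : ℝ → ℝ) (hA : ContinuousOn A (Ioo a b))
    (hbranch : ∀ θ ∈ Ioo a b, f (Complex.exp (θ * I)) = Complex.exp (A θ * I))
    (θ0 : ℝ) (hθ0 : θ0 ∈ Ioo a b) :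
    ∃ d : ℝ, HasDerivAt A d θ0 ∧ 0 ≤ d := by
  have hπ := Real.pi_pos
  have hfN : AnalyticOnNhd ℂ f S := (hSopen.analyticOn_iff_analyticOnNhd).mp hf
  set g : ℝ → ℂ := fun θ => f (Complex.exp (↑θ * I)) with hgdef
  set z0 : ℂ := Complex.exp (↑θ0 * I) with hz0def
  have hz0S : z0 ∈ S := harc θ0 hθ0
  have hfd : HasDerivAt f (deriv f z0) z0 :=
    ((hfN z0 hz0S).differentiableAt).hasDerivAt
  set c : ℂ := deriv f z0 with hcdef
  have hexp : HasDerivAt (fun t : ℝ => Complex.exp (↑t * I)) (z0 * I) θ0 := by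
    have h1 : HasDerivAt (fun t : ℝ => (↑t * I : ℂ)) I θ0 := by
      simpa using Complex.ofRealCLM.hasDerivAt.mul_const I
    simpa using h1.cexp
  have hgd : HasDerivAt g ((z0 * I) * c) θ0 :=
    HasDerivAt.scomp_of_eq (x := θ0) hfd hexp rfl
  have hIoo : Ioo a b ∈ 𝓝 θ0 := Ioo_mem_nhds hθ0.1 hθ0.2
  have hgne : ∀ θ ∈ Ioo a b, g θ ≠ 0 := fun θ hθ => by
    simp only [hgdef]
    rw [hbranch θ hθ]; exact Complex.exp_ne_zero _
  have hg0 : g θ0 ≠ 0 := hgne θ0 hθ0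
  -- derivative of the logarithm branch
  have hdiv : HasDerivAt (fun θ => g θ / g θ0) ((z0 * I * c) / g θ0) θ0 := hgd.div_const _
  have hslit : (fun θ => g θ / g θ0) θ0 ∈ slitPlane := by
    simp only [div_self hg0]; exact one_mem_slitPlane
  have hL : HasDerivAt (fun θ => Complex.log (g θ / g θ0)) ((z0 * I * c) / g θ0) θ0 := by
    have h := hdiv.clog_real hslit
    simpa [div_self hg0] using h
  have hLim : HasDerivAt (fun θ => (Complex.log (g θ / g θ0)).im) ((z0 * I * c) / g θ0).im θ0 :=
    Complex.imCLM.hasFDerivAt.comp_hasDerivAt θ0 hL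
  have hB : HasDerivAt (fun θ => A θ0 + (Complex.log (g θ / g θ0)).im)
      ((z0 * I * c) / g θ0).im θ0 := hLim.const_add _
  have hAcont : ContinuousAt A θ0 := hA.continuousAt hIoo
  have hsmall : ∀ᶠ θ in 𝓝 θ0, |A θ - A θ0| < Real.pi / 2 := by
    have := Metric.tendsto_nhds.mp hAcont (Real.pi / 2) (by positivity)
    simpa [Real.dist_eq] using this
  have hloc : A =ᶠ[𝓝 θ0] fun θ => A θ0 + (Complex.log (g θ / g θ0)).im := by
    filter_upwards [hIoo, hsmall] with θ hθ hsm
    have hgθ : g θ ≠ 0 := hgne θ hθ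
    have habs : ‖g θ / g θ0‖ = 1 := by
      simp only [hgdef]
      rw [norm_div, hmod θ hθ, hmod θ0 hθ0]; norm_num
    have hexpL : Complex.exp (Complex.log (g θ / g θ0)) = g θ / g θ0 :=
      Complex.exp_log (div_ne_zero hgθ hg0)
    have hgq : g θ / g θ0 = Complex.exp ((↑(A θ - A θ0)) * I) := by
      simp only [hgdef]
      rw [hbranch θ hθ, hbranch θ0 hθ0, ← Complex.exp_sub]
      push_cast; ring_nf
    have h1 : Complex.exp (Complex.log (g θ / g θ0) - (↑(A θ - A θ0)) * I) = 1 := by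
      rw [Complex.exp_sub, hexpL, hgq, div_self (Complex.exp_ne_zero _)]
    obtain ⟨n, hn⟩ := Complex.exp_eq_one_iff.mp h1
    have him : (Complex.log (g θ / g θ0)).im - (A θ - A θ0) = n * (2 * Real.pi) := by
      have := congrArg Complex.im hn
      simpa using this
    have hLim_le : |(Complex.log (g θ / g θ0)).im| ≤ Real.pi := by
      rw [Complex.log_im]; exact Complex.abs_arg_le_pi _
    have hn0 : n = 0 := by
      by_contra hne
      have h1n : (1 : ℝ) ≤ |(n : ℝ)| := by exact_mod_cast Int.one_le_abs hne
      have habs2 : |(n : ℝ) * (2 * Real.pi)| ≤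
          |(Complex.log (g θ / g θ0)).im| + |A θ - A θ0| := by
        rw [← him]; exact abs_sub _ _
      rw [abs_mul, abs_of_pos (by positivity : (0:ℝ) < 2 * Real.pi)] at habs2
      nlinarith
    rw [hn0] at him
    push_cast at him
    linarith
  have hAd : HasDerivAt A ((z0 * I * c) / g θ0).im θ0 := hB.congr_of_eventuallyEq hloc
  -- nonnegativity of the derivative
  have h1z : ((1 : ℝ) : ℂ) * z0 = z0 := by norm_num
  have hG : ‖g θ0‖ = 1 := hmod θ0 hθ0
  have hGn : Complex.normSq (g θ0) = 1 := by
    rw [Complex.normSq_eq_norm_sq, hG]; norm_num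
  have hvin : HasDerivAt (fun r : ℝ => ((r : ℂ) * z0)) z0 1 := by
    simpa using Complex.ofRealCLM.hasDerivAt.mul_const z0
  have hv : HasDerivAt (fun r : ℝ => f ((r : ℂ) * z0)) (z0 * c) 1 := by
    have h := HasDerivAt.scomp_of_eq (x := (1 : ℝ)) hfd hvin h1z.symm
    have h2 : z0 • c = z0 * c := rfl
    rw [← h2]; exact h
  set q : ℂ := z0 * c with hqdef
  have hvre : HasDerivAt (fun r : ℝ => (f ((r : ℂ) * z0)).re) q.re 1 :=
    Complex.reCLM.hasFDerivAt.comp_hasDerivAt 1 hv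
  have hvim : HasDerivAt (fun r : ℝ => (f ((r : ℂ) * z0)).im) q.im 1 :=
    Complex.imCLM.hasFDerivAt.comp_hasDerivAt 1 hv
  set G : ℂ := g θ0 with hGdef
  have hfz0 : f (((1 : ℝ) : ℂ) * z0) = G := by
    rw [h1z, hz0def]
  have hu : HasDerivAt (fun r : ℝ => Complex.normSq (f ((r : ℂ) * z0)))
      (2 * (G.re * q.re + G.im * q.im)) 1 := by
    have h := (hvre.mul hvre).add (hvim.mul hvim)
    have heq : (fun r : ℝ => Complex.normSq (f ((r : ℂ) * z0))) =
        fun r : ℝ => (f ((r : ℂ) * z0)).re * (f ((r : ℂ) * z0)).re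
          + (f ((r : ℂ) * z0)).im * (f ((r : ℂ) * z0)).im := by
      funext r; rw [Complex.normSq_apply]
    rw [heq]
    refine h.congr_deriv ?_
    rw [hfz0]; ring
  have habsz0 : ‖z0‖ = 1 := Complex.norm_exp_ofReal_mul_I θ0
  have hu1 : 0 ≤ 2 * (G.re * q.re + G.im * q.im) := by
    have hW := (hu.hasDerivWithinAt (s := Iio 1))
    rw [hasDerivWithinAt_iff_tendsto_slope' (notMem_Iio.mpr le_rfl)] at hW
    refine ge_of_tendsto hW ?_
    filter_upwards [Ioo_mem_nhdsLT_of_mem (⟨zero_lt_one, le_rfl⟩ : (1:ℝ) ∈ Ioc 0 1)]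
      with r hr
    have hrball : ((r : ℂ) * z0) ∈ Metric.ball (0 : ℂ) 1 := by
      rw [Metric.mem_ball, dist_zero_right]
      have hn : ‖(r : ℂ) * z0‖ = |r| := by
        rw [norm_mul, show ‖z0‖ = 1 from by rw [habsz0], mul_one,
          Complex.norm_real, Real.norm_eq_abs]
      rw [hn, abs_of_pos hr.1]; exact hr.2
    have hlt : Complex.normSq (f ((r : ℂ) * z0)) < 1 := by
      rw [Complex.normSq_eq_norm_sq]
      nlinarith [hSchur _ hrball, norm_nonneg (f ((r : ℂ) * z0))]
    have hone : Complex.normSq (f (((1 : ℝ) : ℂ) * z0)) = 1 := by rw [hfz0]; exact hGn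
    rw [slope_def_field]
    apply div_nonneg_of_nonpos
    · rw [hone]; linarith
    · linarith [hr.2]
  refine ⟨_, hAd, ?_⟩
  have hinv : G⁻¹ = starRingEnd ℂ G := by
    rw [Complex.inv_def, hGn]; simp
  have hdz : (z0 * I * c) / G = I * (q * (starRingEnd ℂ G)) := by
    rw [div_eq_mul_inv, hinv, hqdef]; ring
  rw [hdz]
  have him2 : (I * (q * (starRingEnd ℂ G))).im = q.re * G.re + q.im * G.im := by
    simp [Complex.mul_im, Complex.mul_re]
  rw [him2]
  linarith

/-- If a Schur function `f` (analytic on `𝔻` with `|f| < 1`) extends analytically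
across an open arc `{e^{iθ} : θ ∈ (a, b)}` of the unit circle with `|f| = 1` on the
arc, then any continuous branch `A` of the argument, `f(e^{iθ}) = e^{i A(θ)}`, is
strictly monotone increasing there. -/
theorem schur_arg_strictMono_on_arc
    (f : ℂ → ℂ) (S : Set ℂ) (hSopen : IsOpen S)
    (hball : Metric.ball (0 : ℂ) 1 ⊆ S)
    (a b : ℝ) (hab : a < b) (hlen : b - a < 2 * Real.pi)
    (harc : ∀ θ ∈ Ioo a b, Complex.exp (θ * I) ∈ S)
    (hf : AnalyticOn ℂ f S)
    (hSchur : ∀ z ∈ Metric.ball (0 : ℂ) 1, ‖f z‖ < 1)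
    (hmod : ∀ θ ∈ Ioo a b, ‖f (Complex.exp (θ * I))‖ = 1)
    (A : ℝ → ℝ) (hA : ContinuousOn A (Ioo a b))
    (hbranch : ∀ θ ∈ Ioo a b, f (Complex.exp (θ * I)) = Complex.exp (A θ * I)) :
    StrictMonoOn A (Ioo a b) := by
  have hπ := Real.pi_pos
  have key : ∀ θ0 ∈ Ioo a b, ∃ d : ℝ, HasDerivAt A d θ0 ∧ 0 ≤ d := fun θ0 h =>
    schur_key f S hSopen hball a b harc hf hSchur hmod A hA hbranch θ0 h
  have hmono : MonotoneOn A (Ioo a b) := by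
    apply monotoneOn_of_deriv_nonneg (convex_Ioo a b) hA
    · intro θ hθ
      rw [interior_Ioo] at hθ
      obtain ⟨d, hd, _⟩ := key θ hθ
      exact hd.differentiableAt.differentiableWithinAt
    · intro θ hθ
      rw [interior_Ioo] at hθ
      obtain ⟨d, hd, hd0⟩ := key θ hθ
      rw [hd.deriv]; exact hd0
  intro x hx y hy hxy
  refine lt_of_le_of_ne (hmono hx hy hxy.le) ?_
  intro hAeq
  set θm : ℝ := (x + y) / 2 with hθm
  have hxθm : x < θm := by rw [hθm]; linarith
  have hθmy : θm < y := by rw [hθm]; linarith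
  have hθmI : θm ∈ Ioo a b := ⟨lt_trans hx.1 hxθm, lt_trans hθmy hy.2⟩
  set z0 : ℂ := Complex.exp (↑θm * I) with hz0
  set c0 : ℂ := Complex.exp (↑(A x) * I) with hc0
  have hc : ∀ θ ∈ Ioo θm y, f (Complex.exp (↑θ * I)) = c0 := by
    intro θ hθ
    have hθI : θ ∈ Ioo a b := ⟨lt_trans hθmI.1 hθ.1, lt_trans hθ.2 hy.2⟩
    have h1 : A θ ≤ A y := hmono hθI hy hθ.2.le
    have h2 : A x ≤ A θ := hmono hx hθI (le_trans hxθm.le hθ.1.le)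
    have hAθ : A θ = A x := le_antisymm (hAeq ▸ h1) h2
    rw [hbranch θ hθI, hAθ]
  have h0b : (0 : ℂ) ∈ Metric.ball (0 : ℂ) 1 := by simp
  have hz0S : z0 ∈ S := harc θm hθmI
  have hsegS : segment ℝ (0 : ℂ) z0 ⊆ S := by
    intro w hw
    rw [segment_eq_image] at hw
    obtain ⟨t, ht, rfl⟩ := hw
    show (1 - t) • (0 : ℂ) + t • z0 ∈ S
    rw [show (1 - t) • (0 : ℂ) + t • z0 = t • z0 from by simp]
    rcases eq_or_lt_of_le ht.2 with h1 | h1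
    · rw [h1, one_smul]; exact hz0S
    · apply hball
      rw [Metric.mem_ball, dist_zero_right, norm_smul, Real.norm_eq_abs,
        _root_.abs_of_nonneg ht.1,
        show ‖z0‖ = 1 from by rw [hz0, Complex.norm_exp_ofReal_mul_I],
        mul_one]
      exact h1
  have hz0U : z0 ∈ connectedComponentIn S 0 :=
    (convex_segment (0 : ℂ) z0).isPreconnected.subset_connectedComponentIn
      (left_mem_segment ℝ (0 : ℂ) z0) hsegS (right_mem_segment ℝ (0 : ℂ) z0)
  have hUsub : connectedComponentIn S 0 ⊆ S := connectedComponentIn_subset S 0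
  have hfN : AnalyticOnNhd ℂ f S := hSopen.analyticOn_iff_analyticOnNhd.mp hf
  have hfreq : ∃ᶠ z in 𝓝[≠] z0, f z = c0 := by
    have hcont : Tendsto (fun θ : ℝ => Complex.exp (↑θ * I)) (𝓝 θm) (𝓝 z0) := by
      rw [hz0]
      exact ((Complex.continuous_ofReal.mul continuous_const).cexp).continuousAt
    have hmap : Tendsto (fun θ : ℝ => Complex.exp (↑θ * I)) (𝓝[Ioo θm y] θm) (𝓝[≠] z0) := by
      rw [tendsto_nhdsWithin_iff]
      constructor
      · exact hcont.mono_left nhdsWithin_le_nhds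
      · filter_upwards [self_mem_nhdsWithin] with θ hθ
        simp only [mem_compl_iff, mem_singleton_iff, hz0]
        exact expI_ne_expI hθ.1 (by
          have := hθ.2
          have := hx.1; have := hy.2
          simp only [hθm] at *
          linarith)
    have hne : (𝓝[Ioo θm y] θm).NeBot := by
      apply mem_closure_iff_nhdsWithin_neBot.mp
      rw [closure_Ioo (ne_of_lt hθmy)]
      exact ⟨le_refl θm, hθmy.le⟩
    apply hmap.frequently
    apply Eventually.frequently
    filter_upwards [self_mem_nhdsWithin] with θ hθ
    exact hc θ hθ
  have heq : EqOn f (fun _ => c0) (connectedComponentIn S 0) :=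
    (hfN.mono hUsub).eqOn_of_preconnected_of_frequently_eq analyticOnNhd_const
      isPreconnected_connectedComponentIn hz0U hfreq
  have h0U : (0 : ℂ) ∈ connectedComponentIn S 0 := mem_connectedComponentIn (hball h0b)
  have hf0 : f 0 = c0 := heq h0U
  have habs1 : ‖c0‖ = 1 := by
    rw [hc0]; exact Complex.norm_exp_ofReal_mul_I _
  have hlt := hSchur 0 h0b
  rw [hf0, habs1] at hlt
  exact lt_irrefl 1 hlt
end

section
/- Let U be a unitary operator on a complex Hilbert space H, let φ ∈ H be a unit vector, let λ be on the unit circle, and let V = U + (λ − 1)·⟨φ, ·⟩Uφ (which is unitary). For a unitary A and z in the open unit disc, define F_{A,φ}(z) = ⟨φ, (A + z)(A − z)^{−1} φ⟩ and f_{A,φ}(z) = z^{−1}(1 − F_{A,φ}(z))(1 + F_{A,φ}(z))^{−1}. Then for every z in the open unit disc with z ≠ 0, f_{V,φ}(z) = λ^{−1}·f_{U,φ}(z). -/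
/-- The Carathéodory function `F_{A,φ}(z) = ⟨φ, (A + z)(A - z)⁻¹ φ⟩`. -/
noncomputable def caratheodoryF {H : Type*} [NormedAddCommGroup H]
    [InnerProductSpace ℂ H] [CompleteSpace H] (A : H →L[ℂ] H) (φ : H) (z : ℂ) : ℂ :=
  inner ℂ φ (((A + z • (1 : H →L[ℂ] H)) * Ring.inverse (A - z • (1 : H →L[ℂ] H))) φ)

/-- The Schur function `f_{A,φ}(z) = z⁻¹ (1 - F_{A,φ}(z))(1 + F_{A,φ}(z))⁻¹`. -/
noncomputable def schurF {H : Type*} [NormedAddCommGroup H]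
    [InnerProductSpace ℂ H] [CompleteSpace H] (A : H →L[ℂ] H) (φ : H) (z : ℂ) : ℂ :=
  z⁻¹ * (1 - caratheodoryF A φ z) * (1 + caratheodoryF A φ z)⁻¹

section Aux

open ContinuousLinearMap Complex

variable {H : Type*} [NormedAddCommGroup H] [InnerProductSpace ℂ H] [CompleteSpace H]

local notation "⟪" x ", " y "⟫" => @inner ℂ _ _ x y

/-- For a unitary `A` and `‖z‖ < 1`, the operator `A - z•1` is invertible. -/
lemma aux_isUnit {A : H →L[ℂ] H} (hA : A ∈ unitary (H →L[ℂ] H)) {z : ℂ} (hz : ‖z‖ < 1) :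
    IsUnit (A - z • (1 : H →L[ℂ] H)) := by
  have hstar : ‖star A‖ ≤ 1 := by
    refine ContinuousLinearMap.opNorm_le_bound _ zero_le_one (fun x => ?_)
    rw [ContinuousLinearMap.norm_map_of_mem_unitary (Unitary.star_mem hA), one_mul]
  have hsm : ‖z • star A‖ < 1 := by
    rw [norm_smul]
    nlinarith [norm_nonneg z]
  have h1 : IsUnit ((1 : H →L[ℂ] H) - z • star A) := (Units.oneSub _ hsm).isUnit
  have h2 : IsUnit A := ⟨Unitary.toUnits ⟨A, hA⟩, rfl⟩
  have h3 : A * ((1 : H →L[ℂ] H) - z • star A) = A - z • 1 := by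
    rw [mul_sub, mul_one, mul_smul_comm, (Unitary.mem_iff.mp hA).2]
  exact h3 ▸ h2.mul h1

/-- The Carathéodory function in terms of the resolvent. -/
lemma aux_cara (A : H →L[ℂ] H) (φ : H) (hφ : ‖φ‖ = 1) (z : ℂ)
    (u : (H →L[ℂ] H)ˣ) (hu : (u : H →L[ℂ] H) = A - z • 1) :
    caratheodoryF A φ z = 1 + 2 * (z * ⟪φ, (↑u⁻¹ : H →L[ℂ] H) φ⟫) := by
  have hA : A + z • (1 : H →L[ℂ] H) = ↑u + (2 * z) • 1 := by
    rw [hu]; module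
  have hinv : Ring.inverse (A - z • (1 : H →L[ℂ] H)) = (↑u⁻¹ : H →L[ℂ] H) := by
    rw [← hu, Ring.inverse_unit]
  unfold caratheodoryF
  rw [hinv, hA, add_mul, u.mul_inv, smul_mul_assoc, one_mul]
  simp [ContinuousLinearMap.add_apply, ContinuousLinearMap.smul_apply, inner_add_right,
    inner_smul_right, inner_self_eq_norm_sq_to_K, hφ]
  ring

/-- `1 + z ⟪φ, (A - z)⁻¹ φ⟫ ≠ 0` (positivity of the real part of the Carathéodory function). -/
lemma aux_ne {A : H →L[ℂ] H} (hA : A ∈ unitary (H →L[ℂ] H)) (φ : H) (hφ : ‖φ‖ = 1)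
    {z : ℂ} (hz : ‖z‖ < 1) (u : (H →L[ℂ] H)ˣ) (hu : (u : H →L[ℂ] H) = A - z • 1) :
    (1 : ℂ) + z * ⟪φ, (↑u⁻¹ : H →L[ℂ] H) φ⟫ ≠ 0 := by
  set ψ := (↑u⁻¹ : H →L[ℂ] H) φ with hψdef
  have hfix : A ψ - z • ψ = φ := by
    have h := congrArg (fun T : H →L[ℂ] H => T φ) u.mul_inv
    simpa [hu, ContinuousLinearMap.mul_apply, ContinuousLinearMap.sub_apply,
      ContinuousLinearMap.smul_apply] using h
  have hnorm : (1 : ℝ) = ‖ψ‖ ^ 2 - 2 * (z * ⟪A ψ, ψ⟫).re + normSq z * ‖ψ‖ ^ 2 := by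
    have h1 : ‖A ψ - z • ψ‖ ^ 2 = 1 := by rw [hfix, hφ]; norm_num
    rw [@norm_sub_sq ℂ] at h1
    rw [ContinuousLinearMap.norm_map_of_mem_unitary hA, inner_smul_right, norm_smul] at h1
    have h2 : (‖z‖ * ‖ψ‖) ^ 2 = normSq z * ‖ψ‖ ^ 2 := by
      simp [mul_pow, Complex.normSq_eq_norm_sq]
    rw [h2] at h1
    simp only [RCLike.re_to_complex] at h1
    linarith
  have hg : z * ⟪φ, ψ⟫ = z * ⟪A ψ, ψ⟫ - (normSq z : ℝ) * (‖ψ‖ : ℂ) ^ 2 := by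
    rw [← hfix, inner_sub_left, inner_smul_left, inner_self_eq_norm_sq_to_K,
      mul_sub, ← mul_assoc, mul_comm z ((starRingEnd ℂ) z), ← Complex.normSq_eq_conj_mul_self]
    norm_cast
    rw [Complex.ofReal_mul]
    rfl
  have hre : 0 < ((1 : ℂ) + z * ⟪φ, ψ⟫).re := by
    rw [hg]
    have h3 : ((1 : ℂ) + (z * ⟪A ψ, ψ⟫ - (normSq z : ℝ) * (‖ψ‖ : ℂ) ^ 2)).re
        = 1 + (z * ⟪A ψ, ψ⟫).re - normSq z * ‖ψ‖ ^ 2 := by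
      simp [← Complex.ofReal_pow]
      ring
    rw [h3]
    have ht0 : (0:ℝ) ≤ ‖ψ‖ ^ 2 := sq_nonneg _
    have hn1 : normSq z < 1 := by
      rw [Complex.normSq_eq_norm_sq]
      nlinarith [norm_nonneg z]
    nlinarith [mul_nonneg ht0 (by linarith : (0:ℝ) ≤ 1 - normSq z)]
  intro h0
  rw [h0] at hre
  simp at hre

end Aux

/-- **Proposition 2.2**. If `V = U + (λ - 1)⟨φ, ·⟩Uφ` with `U` unitary, `‖φ‖ = 1`,
`|λ| = 1`, then `f_{V,φ}(z) = λ⁻¹ f_{U,φ}(z)` on `𝔻 \ {0}`. -/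
theorem schurF_rankOne_perturbation
    {H : Type*} [NormedAddCommGroup H] [InnerProductSpace ℂ H] [CompleteSpace H]
    (U V : H →L[ℂ] H) (hU : U ∈ unitary (H →L[ℂ] H))
    (φ : H) (hφ : ‖φ‖ = 1) (lam : ℂ) (hlam : ‖lam‖ = 1)
    (hV : ∀ x : H, V x = U x + (lam - 1) • (inner ℂ φ x : ℂ) • U φ) :
    ∀ z ∈ Metric.ball (0 : ℂ) 1, z ≠ 0 → schurF V φ z = lam⁻¹ * schurF U φ z := by
  have hlam0 : lam ≠ 0 := by
    intro h; rw [h] at hlam; simp at hlam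
  have hl : lam * (starRingEnd ℂ) lam = 1 := by
    rw [Complex.mul_conj, Complex.normSq_eq_norm_sq, hlam]; norm_num
  have hconj : (starRingEnd ℂ) lam = lam⁻¹ :=
    (Complex.inv_eq_conj hlam).symm
  have hφφ : (inner ℂ φ φ : ℂ) = 1 := by
    simp [inner_self_eq_norm_sq_to_K, hφ]
  have hUU : ∀ x : H, star U (U x) = x := by
    intro x
    have h := congrArg (fun T : H →L[ℂ] H => T x) (Unitary.mem_iff.mp hU).1
    simpa [ContinuousLinearMap.mul_apply] using h
  have hUU' : ∀ x : H, U (star U x) = x := by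
    intro x
    have h := congrArg (fun T : H →L[ℂ] H => T x) (Unitary.mem_iff.mp hU).2
    simpa [ContinuousLinearMap.mul_apply] using h
  have hinner : ∀ x y : H, (inner ℂ (U x) (U y) : ℂ) = inner ℂ x y :=
    ContinuousLinearMap.inner_map_map_of_mem_unitary hU
  -- the candidate adjoint of V
  set W : H →L[ℂ] H :=
    star U + ((starRingEnd ℂ) lam - 1) • ((innerSL ℂ (U φ)).smulRight φ) with hWdef
  have hW : ∀ y : H, W y = star U y + ((starRingEnd ℂ) lam - 1) • (inner ℂ (U φ) y : ℂ) • φ := by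
    intro y
    simp [hWdef]
  have hstarV : star V = W := by
    rw [ContinuousLinearMap.star_eq_adjoint]
    refine ((ContinuousLinearMap.eq_adjoint_iff W V).mpr fun x y => ?_).symm
    have hadj1 : (inner ℂ ((star U) x) y : ℂ) = inner ℂ x (U y) := by
      rw [ContinuousLinearMap.star_eq_adjoint, ContinuousLinearMap.adjoint_inner_left]
    rw [hW, hV]
    rw [inner_add_left, inner_add_right, inner_smul_left, inner_smul_right,
      inner_smul_left, inner_smul_right, hadj1]
    simp only [map_sub, map_one, Complex.conj_conj, inner_conj_symm]
    ring
  have hVmem : V ∈ unitary (H →L[ℂ] H) := by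
    rw [Unitary.mem_iff, hstarV]
    constructor
    · ext x
      have : W (V x) = x := by
        rw [hV, map_add, map_smul, map_smul, hW, hW, hUU, hUU]
        simp only [hinner, hφφ, inner_add_right, inner_smul_right, hconj]
        match_scalars <;> (field_simp; try ring)
      simpa [ContinuousLinearMap.mul_apply] using this
    · ext x
      have : V (W x) = x := by
        have hadj : (inner ℂ φ ((star U) x) : ℂ) = inner ℂ (U φ) x := by
          rw [ContinuousLinearMap.star_eq_adjoint, ContinuousLinearMap.adjoint_inner_right]
        rw [hW, hV, map_add, map_smul, map_smul, hUU']
        simp only [hadj, hφφ, inner_add_right, inner_smul_right, hconj]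
        match_scalars <;> (field_simp; try ring)
      simpa [ContinuousLinearMap.mul_apply] using this
  intro z hzball hz0
  have hznorm : ‖z‖ < 1 := by simpa [mem_ball_zero_iff] using hzball
  obtain ⟨uU, huU⟩ := aux_isUnit hU hznorm
  obtain ⟨uV, huV⟩ := aux_isUnit hVmem hznorm
  set g : ℂ := inner ℂ φ ((↑uU⁻¹ : H →L[ℂ] H) φ) with hgdef
  set ψ : H := (↑uV⁻¹ : H →L[ℂ] H) φ with hψdef
  set c : ℂ := inner ℂ φ ψ with hcdef
  have hcaraU : caratheodoryF U φ z = 1 + 2 * (z * g) := aux_cara U φ hφ z uU huU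
  have hcaraV : caratheodoryF V φ z = 1 + 2 * (z * c) := aux_cara V φ hφ z uV huV
  have dU : (1 : ℂ) + z * g ≠ 0 := aux_ne hU φ hφ hznorm uU huU
  have dV : (1 : ℂ) + z * c ≠ 0 := aux_ne hVmem φ hφ hznorm uV huV
  -- the resolvent identity
  have hfixV : V ψ - z • ψ = φ := by
    have h := congrArg (fun T : H →L[ℂ] H => T φ) uV.mul_inv
    simpa [huV, ContinuousLinearMap.mul_apply, ContinuousLinearMap.sub_apply,
      ContinuousLinearMap.smul_apply] using h
  rw [hV ψ, ← hcdef] at hfixV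
  have h2 : (↑uU : H →L[ℂ] H) ψ = φ - ((lam - 1) * c) • U φ := by
    have hgoal : (↑uU : H →L[ℂ] H) ψ
        = (U ψ + (lam - 1) • c • U φ - z • ψ) - ((lam - 1) * c) • U φ := by
      rw [show ((↑uU : H →L[ℂ] H)) = U - z • 1 from huU]
      simp only [ContinuousLinearMap.sub_apply, ContinuousLinearMap.smul_apply,
        ContinuousLinearMap.one_apply]
      module
    rw [hfixV] at hgoal
    exact hgoal
  have h4 : ∀ x : H, (↑uU⁻¹ : H →L[ℂ] H) ((↑uU : H →L[ℂ] H) x) = x := by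
    intro x
    show ((↑(uU⁻¹ * uU) : H →L[ℂ] H)) x = x
    simp
  have hψeq : ψ = (↑uU⁻¹ : H →L[ℂ] H) φ - ((lam - 1) * c) • (↑uU⁻¹ : H →L[ℂ] H) (U φ) := by
    have h5 := congrArg (↑uU⁻¹ : H →L[ℂ] H) h2
    rw [h4 ψ, map_sub, map_smul] at h5
    exact h5
  have hUinvU : (↑uU⁻¹ : H →L[ℂ] H) (U φ) = φ + z • (↑uU⁻¹ : H →L[ℂ] H) φ := by
    have hUeq : U φ = (↑uU : H →L[ℂ] H) φ + z • φ := by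
      rw [show ((↑uU : H →L[ℂ] H)) = U - z • 1 from huU]
      rw [ContinuousLinearMap.sub_apply, ContinuousLinearMap.smul_apply,
        ContinuousLinearMap.one_apply]
      module
    rw [hUeq, map_add, map_smul]
    rw [h4 φ]
  have hc : c = g - (lam - 1) * c * (1 + z * g) := by
    conv_lhs => rw [hcdef, hψeq]
    rw [inner_sub_right, inner_smul_right, hUinvU, inner_add_right, inner_smul_right,
      hφφ, ← hgdef]
  -- final computation
  rw [schurF, schurF, hcaraU, hcaraV]
  have e1 : (1 : ℂ) - (1 + 2 * (z * c)) = -(2 * (z * c)) := by ring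
  have e2 : (1 : ℂ) + (1 + 2 * (z * c)) = 2 * (1 + z * c) := by ring
  have e3 : (1 : ℂ) - (1 + 2 * (z * g)) = -(2 * (z * g)) := by ring
  have e4 : (1 : ℂ) + (1 + 2 * (z * g)) = 2 * (1 + z * g) := by ring
  have hfV : z⁻¹ * -(2 * (z * c)) * (2 * (1 + z * c))⁻¹ = -c * (1 + z * c)⁻¹ := by
    field_simp
  have hfU : z⁻¹ * -(2 * (z * g)) * (2 * (1 + z * g))⁻¹ = -g * (1 + z * g)⁻¹ := by
    field_simp
  rw [e1, e2, e3, e4, hfV, hfU]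
  rw [mul_comm z c] at dV ⊢
  field_simp
  linear_combination -hc
end

section
/- Let H = K1 ⊕ K2 be an orthogonal direct sum of finite-dimensional complex Hilbert spaces, let U = U1 ⊕ U2 with U_j unitary on K_j, let φ_j be a cyclic vector for U_j on K_j (j = 1, 2), and let φ = a·φ1 ⊕ b·φ2 with a ≠ 0 and b ≠ 0. Then φ is a cyclic vector for U if and only if U1 and U2 have no eigenvalue in common. -/
private lemma aux_span_orth {H : Type*} [NormedAddCommGroup H] [InnerProductSpace ℂ H]
    {T : Set H} {w : H} (h : ∀ u ∈ T, inner ℂ u w = (0:ℂ)) :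
    w ∈ (Submodule.span ℂ T)ᗮ := by
  rw [Submodule.mem_orthogonal]
  intro u hu
  induction hu using Submodule.span_induction with
  | mem x hx => exact h x hx
  | zero => simp
  | add x y _ _ hx hy => rw [inner_add_left, hx, hy, add_zero]
  | smul c x _ hx => rw [inner_smul_left, hx, mul_zero]

/-- **Remark after Proposition 2.6**. With `H = K1 ⊕ K2`, `U = U1 ⊕ U2` unitary,
`φⱼ` cyclic for `U` restricted to `Kⱼ`, and `φ = a φ1 + b φ2` with `a, b ≠ 0`:
`φ` is cyclic for `U` if and only if `U1` and `U2` have no eigenvalue in common. -/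
theorem directSum_cyclic_iff_no_common_eigenvalue
    {H : Type*} [NormedAddCommGroup H] [InnerProductSpace ℂ H] [FiniteDimensional ℂ H]
    (K1 K2 : Submodule ℂ H) (hperp : K2 = K1ᗮ)
    (U : H →L[ℂ] H) (hU : U ∈ unitary (H →L[ℂ] H))
    (hinv1 : ∀ x ∈ K1, U x ∈ K1) (hinv2 : ∀ x ∈ K2, U x ∈ K2)
    (φ1 φ2 : H) (hφ1 : φ1 ∈ K1) (hφ2 : φ2 ∈ K2)
    (hcyc1 : Submodule.span ℂ {x | ∃ k : ℕ, x = (U ^ k) φ1} = K1)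
    (hcyc2 : Submodule.span ℂ {x | ∃ k : ℕ, x = (U ^ k) φ2} = K2)
    (a b : ℂ) (ha : a ≠ 0) (hb : b ≠ 0) :
    Submodule.span ℂ {x | ∃ k : ℕ, x = (U ^ k) (a • φ1 + b • φ2)} = ⊤ ↔
      {μ : ℂ | ∃ v ∈ K1, v ≠ 0 ∧ U v = μ • v} ∩
        {μ : ℂ | ∃ v ∈ K2, v ≠ 0 ∧ U v = μ • v} = ∅ := by
  classical
  haveI : CompleteSpace H := FiniteDimensional.complete ℂ H
  set V := ContinuousLinearMap.adjoint U with hV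
  obtain ⟨hm1, hm2⟩ := Unitary.mem_iff.mp hU
  have hVU : ∀ x : H, V (U x) = x := by
    intro x
    have := congrArg (fun (T : H →L[ℂ] H) => T x) hm1
    simpa [ContinuousLinearMap.star_eq_adjoint, ContinuousLinearMap.mul_apply, ← hV] using this
  have hUV : ∀ x : H, U (V x) = x := by
    intro x
    have := congrArg (fun (T : H →L[ℂ] H) => T x) hm2
    simpa [ContinuousLinearMap.star_eq_adjoint, ContinuousLinearMap.mul_apply, ← hV] using this
  -- powers
  have hpowsucc : ∀ (k : ℕ) (x : H), (U ^ (k+1)) x = (U ^ k) (U x) := by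
    intro k x
    rw [pow_succ, ContinuousLinearMap.mul_apply]
  have hpowsucc' : ∀ (k : ℕ) (x : H), (U ^ (k+1)) x = U ((U ^ k) x) := by
    intro k x
    rw [pow_succ', ContinuousLinearMap.mul_apply]
  have hpowmem : ∀ (p : Submodule ℂ H), (∀ x ∈ p, U x ∈ p) →
      ∀ (k : ℕ) (x : H), x ∈ p → (U ^ k) x ∈ p := by
    intro p hp k
    induction k with
    | zero => intro x hx; simpa using hx
    | succ n ih =>
      intro x hx
      rw [hpowsucc]
      exact ih _ (hp x hx)
  have hφk1 : ∀ k : ℕ, (U ^ k) φ1 ∈ K1 := fun k => hpowmem K1 hinv1 k φ1 hφ1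
  have hφk2 : ∀ k : ℕ, (U ^ k) φ2 ∈ K2 := fun k => hpowmem K2 hinv2 k φ2 hφ2
  -- orthogonality helpers
  have horth12 : ∀ u ∈ K1, ∀ v ∈ K2, (inner ℂ u v : ℂ) = 0 := by
    intro u hu v hv
    rw [hperp] at hv
    exact (Submodule.mem_orthogonal K1 v).mp hv u hu
  have horth21 : ∀ v ∈ K2, ∀ u ∈ K1, (inner ℂ v u : ℂ) = 0 := by
    intro v hv u hu
    rw [hperp] at hv
    exact (Submodule.mem_orthogonal' K1 v).mp hv u hu
  have hzero : ∀ (p : Submodule ℂ H) (v : H), v ∈ p → v ∈ pᗮ → v = 0 := by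
    intro p v hv hv'
    have := (Submodule.mem_orthogonal p v).mp hv' v hv
    simpa [inner_self_eq_zero] using this
  -- adjoint eigenvalue power formula
  have hadj_pow : ∀ (v : H) (ν : ℂ), V v = ν • v →
      ∀ (k : ℕ) (x : H), (inner ℂ ((U ^ k) x) v : ℂ) = ν ^ k * inner ℂ x v := by
    intro v ν hv k
    induction k with
    | zero => intro x; simp
    | succ n ih =>
      intro x
      have h2 : (inner ℂ (U x) v : ℂ) = ν * inner ℂ x v := by
        rw [← ContinuousLinearMap.adjoint_inner_right U x v, ← hV, hv, inner_smul_right]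
      rw [hpowsucc, ih, h2]
      ring
  -- U-eigenvector gives V-eigenvector
  have hUtoV : ∀ (v : H) (μ : ℂ), v ≠ 0 → U v = μ • v → μ ≠ 0 ∧ V v = μ⁻¹ • v := by
    intro v μ hvne huv
    have key : μ • V v = v := by
      have h := hVU v
      rwa [huv, map_smul] at h
    have hμ : μ ≠ 0 := by
      intro h
      rw [h, zero_smul] at key
      exact hvne key.symm
    refine ⟨hμ, ?_⟩
    calc V v = μ⁻¹ • (μ • V v) := by rw [smul_smul, inv_mul_cancel₀ hμ, one_smul]
    _ = μ⁻¹ • v := by rw [key]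
  -- cyclicity: orthogonal to orbit implies zero
  have hcy1 : ∀ v ∈ K1, (∀ k : ℕ, (inner ℂ ((U ^ k) φ1) v : ℂ) = 0) → v = 0 := by
    intro v hv h
    have hv' : v ∈ (Submodule.span ℂ {x | ∃ k : ℕ, x = (U ^ k) φ1})ᗮ :=
      aux_span_orth (by rintro u ⟨k, rfl⟩; exact h k)
    rw [hcyc1] at hv'
    exact hzero K1 v hv hv'
  have hcy2 : ∀ v ∈ K2, (∀ k : ℕ, (inner ℂ ((U ^ k) φ2) v : ℂ) = 0) → v = 0 := by
    intro v hv h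
    have hv' : v ∈ (Submodule.span ℂ {x | ∃ k : ℕ, x = (U ^ k) φ2})ᗮ :=
      aux_span_orth (by rintro u ⟨k, rfl⟩; exact h k)
    rw [hcyc2] at hv'
    exact hzero K2 v hv hv'
  have hφexp : ∀ k : ℕ, (U ^ k) (a • φ1 + b • φ2) = a • (U ^ k) φ1 + b • (U ^ k) φ2 := by
    intro k; rw [map_add, map_smul, map_smul]
  constructor
  · -- cyclic → no common eigenvalue
    intro hspan
    rw [Set.eq_empty_iff_forall_notMem]
    rintro μ ⟨⟨v1, hv1K, hv1ne, hv1e⟩, v2, hv2K, hv2ne, hv2e⟩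
    obtain ⟨hμ, hVv1⟩ := hUtoV v1 μ hv1ne hv1e
    obtain ⟨-, hVv2⟩ := hUtoV v2 μ hv2ne hv2e
    have hip1 : (inner ℂ φ1 v1 : ℂ) ≠ 0 := by
      intro h0
      refine hv1ne (hcy1 v1 hv1K fun k => ?_)
      rw [hadj_pow v1 μ⁻¹ hVv1 k φ1, h0, mul_zero]
    have hip2 : (inner ℂ φ2 v2 : ℂ) ≠ 0 := by
      intro h0
      refine hv2ne (hcy2 v2 hv2K fun k => ?_)
      rw [hadj_pow v2 μ⁻¹ hVv2 k φ2, h0, mul_zero]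
    have hA : starRingEnd ℂ a * (inner ℂ φ1 v1 : ℂ) ≠ 0 :=
      mul_ne_zero (by simpa using ha) hip1
    have hB : starRingEnd ℂ b * (inner ℂ φ2 v2 : ℂ) ≠ 0 :=
      mul_ne_zero (by simpa using hb) hip2
    set c1 : ℂ := (starRingEnd ℂ a * inner ℂ φ1 v1)⁻¹ with hc1
    set c2 : ℂ := -(starRingEnd ℂ b * inner ℂ φ2 v2)⁻¹ with hc2
    set w : H := c1 • v1 + c2 • v2 with hw
    have hworth : ∀ k : ℕ, (inner ℂ ((U ^ k) (a • φ1 + b • φ2)) w : ℂ) = 0 := by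
      intro k
      rw [hw, inner_add_right, inner_smul_right, inner_smul_right,
        hadj_pow v1 μ⁻¹ hVv1 k _, hadj_pow v2 μ⁻¹ hVv2 k _,
        inner_add_left, inner_add_left, inner_smul_left, inner_smul_left,
        inner_smul_left, inner_smul_left,
        horth21 φ2 hφ2 v1 hv1K, horth12 φ1 hφ1 v2 hv2K, hc1, hc2]
      field_simp
      have ha' : starRingEnd ℂ a ≠ 0 := by simpa using ha
      have hb' : starRingEnd ℂ b ≠ 0 := by simpa using hb
      simp only [mul_zero, add_zero, zero_add]
      field_simp
      ring
    have hwperp : w ∈ (Submodule.span ℂ {x | ∃ k : ℕ, x = (U ^ k) (a • φ1 + b • φ2)})ᗮ :=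
      aux_span_orth (by rintro u ⟨k, rfl⟩; exact hworth k)
    rw [hspan, Submodule.top_orthogonal_eq_bot, Submodule.mem_bot] at hwperp
    -- but w ≠ 0
    have hc1ne : c1 ≠ 0 := inv_ne_zero hA
    have heq : c1 • v1 = -(c2 • v2) := eq_neg_of_add_eq_zero_left hwperp
    have hmem1 : c1 • v1 ∈ K1 := K1.smul_mem _ hv1K
    have hmem2 : c1 • v1 ∈ K1ᗮ := by
      rw [heq]
      exact Submodule.neg_mem _ (Submodule.smul_mem _ _ (by rw [← hperp]; exact hv2K))
    have := hzero K1 _ hmem1 hmem2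
    rcases smul_eq_zero.mp this with h | h
    · exact hc1ne h
    · exact hv1ne h
  · -- no common eigenvalue → cyclic
    intro hempty
    by_contra hspan
    set S := Submodule.span ℂ {x | ∃ k : ℕ, x = (U ^ k) (a • φ1 + b • φ2)} with hS
    have hSinv : ∀ u ∈ S, U u ∈ S := by
      intro u hu
      have hle : S ≤ Submodule.comap (U : H →ₗ[ℂ] H) S := by
        apply Submodule.span_le.mpr
        rintro x ⟨k, rfl⟩
        simp only [Submodule.mem_comap, SetLike.mem_coe, ContinuousLinearMap.coe_coe]
        exact Submodule.subset_span ⟨k + 1, (hpowsucc' k (a • φ1 + b • φ2)).symm⟩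
      exact hle hu
    have hWne : Sᗮ ≠ ⊥ := fun h => hspan (Submodule.orthogonal_eq_bot_iff.mp h)
    have hWinv : ∀ x ∈ Sᗮ, V x ∈ Sᗮ := by
      intro x hx
      rw [Submodule.mem_orthogonal]
      intro u hu
      rw [hV, ContinuousLinearMap.adjoint_inner_right U u x]
      exact (Submodule.mem_orthogonal S x).mp hx _ (hSinv u hu)
    haveI : Nontrivial (Sᗮ) := Submodule.nontrivial_iff_ne_bot.mpr hWne
    set f : Sᗮ →ₗ[ℂ] Sᗮ := (V : H →ₗ[ℂ] H).restrict hWinv with hf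
    obtain ⟨ν, hν⟩ := Module.End.exists_eigenvalue f
    obtain ⟨v, hv⟩ := hν.exists_hasEigenvector
    have hw0 : (v : H) ≠ 0 := fun h => hv.2 (by exact_mod_cast Subtype.coe_injective (h.trans rfl) )
    have hVw : V (v : H) = ν • (v : H) := by
      have := congrArg (Subtype.val) hv.apply_eq_smul
      simpa [hf, LinearMap.restrict_coe_apply] using this
    have hν0 : ν ≠ 0 := by
      intro h
      apply hw0
      have h1 := hUV (v : H)
      rw [hVw, h, zero_smul, map_zero] at h1
      exact h1.symm
    have key : ν • U (v : H) = (v : H) := by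
      have h1 := hUV (v : H)
      rwa [hVw, map_smul] at h1
    have hUw : U (v : H) = ν⁻¹ • (v : H) := by
      calc U (v:H) = ν⁻¹ • (ν • U (v:H)) := by rw [smul_smul, inv_mul_cancel₀ hν0, one_smul]
      _ = ν⁻¹ • (v:H) := by rw [key]
    -- decompose
    have hvtop : (v : H) ∈ K1 ⊔ K1ᗮ := by
      rw [Submodule.sup_orthogonal_of_hasOrthogonalProjection]; trivial
    obtain ⟨w1, hw1K, w2, hw2K', hsum⟩ := Submodule.mem_sup.mp hvtop
    have hw2K : w2 ∈ K2 := by rw [hperp]; exact hw2K'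
    -- componentwise eigenvector
    have hd : (U w1 - ν⁻¹ • w1) + (U w2 - ν⁻¹ • w2) = 0 := by
      rw [sub_add_sub_comm, ← map_add, ← smul_add, hsum, hUw, sub_self]
    have hd1K : U w1 - ν⁻¹ • w1 ∈ K1 := K1.sub_mem (hinv1 _ hw1K) (K1.smul_mem _ hw1K)
    have hd2K : U w2 - ν⁻¹ • w2 ∈ K2 := K2.sub_mem (hinv2 _ hw2K) (K2.smul_mem _ hw2K)
    have hd1 : U w1 - ν⁻¹ • w1 = 0 := by
      refine hzero K1 _ hd1K ?_
      rw [eq_neg_of_add_eq_zero_left hd]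
      exact Submodule.neg_mem _ (by rw [← hperp]; exact hd2K)
    have hd2 : U w2 - ν⁻¹ • w2 = 0 := by
      have := eq_neg_of_add_eq_zero_right hd
      rw [this, hd1, neg_zero]
    have hUw1 : U w1 = ν⁻¹ • w1 := sub_eq_zero.mp hd1
    have hUw2 : U w2 = ν⁻¹ • w2 := sub_eq_zero.mp hd2
    -- orthogonality to the orbit of φ
    have hworthS : ∀ k : ℕ, (inner ℂ ((U ^ k) (a • φ1 + b • φ2)) (v : H) : ℂ) = 0 := fun k =>
      (Submodule.mem_orthogonal S (v : H)).mp v.2 _ (Submodule.subset_span ⟨k, rfl⟩)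
    -- both components nonzero
    have hw1ne : w1 ≠ 0 := by
      intro h0
      have hw2eq : (v : H) = w2 := by rw [← hsum, h0, zero_add]
      have horb : ∀ k : ℕ, (inner ℂ ((U ^ k) φ2) w2 : ℂ) = 0 := by
        intro k
        have h1 := hworthS k
        rw [hw2eq, hφexp k, inner_add_left, inner_smul_left, inner_smul_left,
          horth12 _ (hφk1 k) _ hw2K, mul_zero, zero_add] at h1
        exact (mul_eq_zero.mp h1).resolve_left (by simpa using hb)
      exact hw0 (by rw [hw2eq, hcy2 w2 hw2K horb])
    have hw2ne : w2 ≠ 0 := by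
      intro h0
      have hw1eq : (v : H) = w1 := by rw [← hsum, h0, add_zero]
      have horb : ∀ k : ℕ, (inner ℂ ((U ^ k) φ1) w1 : ℂ) = 0 := by
        intro k
        have h1 := hworthS k
        rw [hw1eq, hφexp k, inner_add_left, inner_smul_left, inner_smul_left,
          horth21 _ (hφk2 k) _ hw1K, mul_zero, add_zero] at h1
        exact (mul_eq_zero.mp h1).resolve_left (by simpa using ha)
      exact hw0 (by rw [hw1eq, hcy1 w1 hw1K horb])
    rw [Set.eq_empty_iff_forall_notMem] at hempty
    exact hempty ν⁻¹ ⟨⟨w1, hw1K, hw1ne, hUw1⟩, ⟨w2, hw2K, hw2ne, hUw2⟩⟩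
end

section
/- Let n ≥ 1, let γ_0, …, γ_{n−2} lie in the open unit disc, and let γ_{n−1} lie on the unit circle. Then the vector δ_0 = (1, 0, …, 0) ∈ ℂ^n is a cyclic vector for the finite CMV matrix C_n(γ_0, …, γ_{n−1}), i.e., the vectors C_n^k δ_0, k ≥ 0, span ℂ^n. -/
noncomputable def tauc (γ : ℂ) : ℂ := (Real.sqrt (1 - ‖γ‖ ^ 2) : ℝ)

lemma tauc_conj (γ : ℂ) : (starRingEnd ℂ) (tauc γ) = tauc γ := by
  simp [tauc]

lemma tauc_sq (γ : ℂ) (h : ‖γ‖ ≤ 1) :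
    tauc γ ^ 2 = 1 - (starRingEnd ℂ) γ * γ := by
  have h2 : (0:ℝ) ≤ 1 - ‖γ‖ ^ 2 := by
    nlinarith [norm_nonneg γ]
  have h3 : (starRingEnd ℂ) γ * γ = ((‖γ‖ ^ 2 : ℝ) : ℂ) := by
    rw [mul_comm, Complex.mul_conj]
    norm_cast
    rw [Complex.sq_norm]
  rw [tauc, h3, ← Complex.ofReal_pow, Real.sq_sqrt h2]
  push_cast; ring

lemma tauc_ne (γ : ℂ) (h : ‖γ‖ < 1) : tauc γ ≠ 0 := by
  have h2 : (0:ℝ) < 1 - ‖γ‖ ^ 2 := by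
    nlinarith [norm_nonneg γ]
  simp only [tauc, ne_eq, Complex.ofReal_eq_zero]
  positivity

open Matrix in
lemma col2 {n : ℕ} (A : Matrix (Fin n) (Fin n) ℂ) (j a b : Fin n) (hab : a ≠ b) (ca cb : ℂ)
    (h : ∀ i : Fin n, A i j = if i = a then ca else if i = b then cb else 0) :
    A *ᵥ Pi.single j 1 = ca • (Pi.single a 1 : Fin n → ℂ) + cb • (Pi.single b 1 : Fin n → ℂ) := by
  funext i
  simp only [Matrix.mulVec_single, mul_one, h i, Pi.add_apply, Pi.smul_apply,
    Pi.single_apply, smul_eq_mul]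
  by_cases h1 : i = a <;> by_cases h2 : i = b <;> simp_all

open Matrix in
lemma col1 {n : ℕ} (A : Matrix (Fin n) (Fin n) ℂ) (j a : Fin n) (ca : ℂ)
    (h : ∀ i : Fin n, A i j = if i = a then ca else 0) :
    A *ᵥ Pi.single j 1 = ca • (Pi.single a 1 : Fin n → ℂ) := by
  funext i
  simp only [Matrix.mulVec_single, mul_one, h i, Pi.smul_apply, Pi.single_apply, smul_eq_mul]
  by_cases h1 : i = a <;> simp_all

/-- Entries of the semi-infinite CMV factor `L = Θ(γ₀) ⊕ Θ(γ₂) ⊕ ⋯`, where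
`Θ(γ)` is the 2×2 matrix with rows `(conj γ, τ)`, `(τ, -γ)` and the block `Θ(γ_{2j})`
occupies rows and columns `2j, 2j+1`. -/
noncomputable def Lent (γ : ℕ → ℂ) (i j : ℕ) : ℂ :=
  if i % 2 = 0 then
    if j = i then (starRingEnd ℂ) (γ i) else if j = i + 1 then tauc (γ i) else 0
  else
    if j = i - 1 then tauc (γ (i - 1)) else if j = i then -γ (i - 1) else 0

/-- Entries of the semi-infinite CMV factor `M = 1 ⊕ Θ(γ₁) ⊕ Θ(γ₃) ⊕ ⋯`, the block
`Θ(γ_{2j+1})` occupying rows and columns `2j+1, 2j+2`. -/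
noncomputable def Ment (γ : ℕ → ℂ) (i j : ℕ) : ℂ :=
  if i = 0 then (if j = 0 then 1 else 0)
  else if i % 2 = 1 then
    if j = i then (starRingEnd ℂ) (γ i) else if j = i + 1 then tauc (γ i) else 0
  else
    if j = i - 1 then tauc (γ (i - 1)) else if j = i then -γ (i - 1) else 0

section
variable (γ : ℕ → ℂ)

lemma L_even (j : ℕ) (hj : j % 2 = 0) (i : ℕ) :
    Lent γ i j = if i = j then (starRingEnd ℂ) (γ j) else if i = j + 1 then tauc (γ j) else 0 := by
  unfold Lent
  split_ifs <;> first | rfl | omega | (exfalso; omega) | (exact (False.elim (by assumption))) | (exact (False.elim (by assumption))) | (congr 2 <;> omega) | (congr 3 <;> omega)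

lemma L_odd (j : ℕ) (hj : j % 2 = 1) (i : ℕ) :
    Lent γ i j = if i = j - 1 then tauc (γ (j-1)) else if i = j then -γ (j-1) else 0 := by
  unfold Lent
  split_ifs <;> first | rfl | omega | (exfalso; omega) | (exact (False.elim (by assumption))) | (exact (False.elim (by assumption))) | (congr 2 <;> omega) | (congr 3 <;> omega)

lemma M_zero (i : ℕ) : Ment γ i 0 = if i = 0 then 1 else 0 := by
  unfold Ment
  split_ifs <;> first | rfl | omega | (exfalso; omega) | (exact (False.elim (by assumption))) | (exact (False.elim (by assumption)))

lemma M_odd (j : ℕ) (hj : j % 2 = 1) (i : ℕ) :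
    Ment γ i j = if i = j then (starRingEnd ℂ) (γ j) else if i = j + 1 then tauc (γ j) else 0 := by
  unfold Ment
  split_ifs <;> first | rfl | omega | (exfalso; omega) | (exact (False.elim (by assumption))) | (exact (False.elim (by assumption))) | (congr 2 <;> omega) | (congr 3 <;> omega)

lemma M_even (j : ℕ) (hj : j % 2 = 0) (hj0 : j ≠ 0) (i : ℕ) :
    Ment γ i j = if i = j - 1 then tauc (γ (j-1)) else if i = j then -γ (j-1) else 0 := by
  unfold Ment
  split_ifs <;> first | rfl | omega | (exfalso; omega) | (exact (False.elim (by assumption))) | (exact (False.elim (by assumption))) | (congr 2 <;> omega) | (congr 3 <;> omega)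

end

section
variable (γ : ℕ → ℂ) {n : ℕ}

noncomputable def Lmf (γ : ℕ → ℂ) (n : ℕ) : Matrix (Fin n) (Fin n) ℂ :=
  Matrix.of fun i j : Fin n => Lent γ i j

noncomputable def Mmf (γ : ℕ → ℂ) (n : ℕ) : Matrix (Fin n) (Fin n) ℂ :=
  Matrix.of fun i j : Fin n => Ment γ i j

open Matrix

lemma LH_even (j : ℕ) (hj : j % 2 = 0) (i : ℕ) :
    (starRingEnd ℂ) (Lent γ j i) = if i = j then γ j else if i = j + 1 then tauc (γ j) else 0 := by
  unfold Lent
  simp only [hj, if_true]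
  split_ifs <;> first | simp [tauc_conj] | omega | (exfalso; omega) | (exact (False.elim (by assumption)))

lemma LH_odd (j : ℕ) (hj : j % 2 = 1) (i : ℕ) :
    (starRingEnd ℂ) (Lent γ j i) =
      if i = j - 1 then tauc (γ (j-1)) else if i = j then -((starRingEnd ℂ) (γ (j-1))) else 0 := by
  have h0 : ¬ j % 2 = 0 := by omega
  unfold Lent
  simp only [h0, if_false]
  split_ifs <;> first | simp [tauc_conj] | omega | (exfalso; omega) | (exact (False.elim (by assumption)))

lemma MH_zero (i : ℕ) : (starRingEnd ℂ) (Ment γ 0 i) = if i = 0 then 1 else 0 := by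
  unfold Ment
  norm_num

lemma MH_odd (j : ℕ) (hj : j % 2 = 1) (i : ℕ) :
    (starRingEnd ℂ) (Ment γ j i) = if i = j then γ j else if i = j + 1 then tauc (γ j) else 0 := by
  have h0 : ¬ j = 0 := by omega
  unfold Ment
  simp only [h0, if_false, hj, if_true]
  split_ifs <;> first | simp [tauc_conj] | omega | (exfalso; omega) | (exact (False.elim (by assumption)))

lemma MH_even (j : ℕ) (hj : j % 2 = 0) (hj0 : j ≠ 0) (i : ℕ) :
    (starRingEnd ℂ) (Ment γ j i) =
      if i = j - 1 then tauc (γ (j-1)) else if i = j then -((starRingEnd ℂ) (γ (j-1))) else 0 := by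
  have h1 : ¬ j % 2 = 1 := by omega
  unfold Ment
  simp only [hj0, if_false, h1]
  split_ifs <;> first | simp [tauc_conj] | omega | (exfalso; omega) | (exact (False.elim (by assumption)))

end

section
variable (γ : ℕ → ℂ) {n : ℕ}
open Matrix

lemma Lcol_even (j : ℕ) (hj : j % 2 = 0) (h1 : j + 1 < n) :
    Lmf γ n *ᵥ Pi.single (⟨j, by omega⟩ : Fin n) 1
      = (starRingEnd ℂ) (γ j) • (Pi.single (⟨j, by omega⟩ : Fin n) 1 : Fin n → ℂ)
        + tauc (γ j) • (Pi.single (⟨j+1, h1⟩ : Fin n) 1 : Fin n → ℂ) := by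
  apply col2 _ _ _ _ (by simp [Fin.ext_iff])
  intro i
  show Lent γ i j = _
  rw [L_even γ j hj i]
  simp [Fin.ext_iff]

lemma Lcol_even_last (hn : 0 < n) (hj : (n-1) % 2 = 0) :
    Lmf γ n *ᵥ Pi.single (⟨n-1, by omega⟩ : Fin n) 1
      = (starRingEnd ℂ) (γ (n-1)) • (Pi.single (⟨n-1, by omega⟩ : Fin n) 1 : Fin n → ℂ) := by
  apply col1
  intro i
  show Lent γ i (n-1) = _
  rw [L_even γ (n-1) hj i]
  have h2 : ¬ ((i:ℕ) = n - 1 + 1) := by omega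
  simp [Fin.ext_iff, h2]

lemma Lcol_odd (j : ℕ) (hj : j % 2 = 1) (hjn : j < n) :
    Lmf γ n *ᵥ Pi.single (⟨j, hjn⟩ : Fin n) 1
      = tauc (γ (j-1)) • (Pi.single (⟨j-1, by omega⟩ : Fin n) 1 : Fin n → ℂ)
        + (-γ (j-1)) • (Pi.single (⟨j, hjn⟩ : Fin n) 1 : Fin n → ℂ) := by
  apply col2 _ _ _ _ (by simp [Fin.ext_iff]; omega)
  intro i
  show Lent γ i j = _
  rw [L_odd γ j hj i]
  simp [Fin.ext_iff]

lemma Mcol_zero (hn : 0 < n) :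
    Mmf γ n *ᵥ Pi.single (⟨0, hn⟩ : Fin n) 1 = Pi.single (⟨0, hn⟩ : Fin n) 1 := by
  have := col1 (Mmf γ n) ⟨0, hn⟩ ⟨0, hn⟩ 1 ?_
  · simpa using this
  intro i
  show Ment γ i 0 = _
  rw [M_zero γ i]
  simp [Fin.ext_iff]

lemma Mcol_odd (j : ℕ) (hj : j % 2 = 1) (h1 : j + 1 < n) :
    Mmf γ n *ᵥ Pi.single (⟨j, by omega⟩ : Fin n) 1
      = (starRingEnd ℂ) (γ j) • (Pi.single (⟨j, by omega⟩ : Fin n) 1 : Fin n → ℂ)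
        + tauc (γ j) • (Pi.single (⟨j+1, h1⟩ : Fin n) 1 : Fin n → ℂ) := by
  apply col2 _ _ _ _ (by simp [Fin.ext_iff])
  intro i
  show Ment γ i j = _
  rw [M_odd γ j hj i]
  simp [Fin.ext_iff]

lemma Mcol_odd_last (hn : 0 < n) (hj : (n-1) % 2 = 1) :
    Mmf γ n *ᵥ Pi.single (⟨n-1, by omega⟩ : Fin n) 1
      = (starRingEnd ℂ) (γ (n-1)) • (Pi.single (⟨n-1, by omega⟩ : Fin n) 1 : Fin n → ℂ) := by
  apply col1
  intro i
  show Ment γ i (n-1) = _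
  rw [M_odd γ (n-1) hj i]
  have h2 : ¬ ((i:ℕ) = n - 1 + 1) := by omega
  simp [Fin.ext_iff, h2]

lemma Mcol_even (j : ℕ) (hj : j % 2 = 0) (hj0 : j ≠ 0) (hjn : j < n) :
    Mmf γ n *ᵥ Pi.single (⟨j, hjn⟩ : Fin n) 1
      = tauc (γ (j-1)) • (Pi.single (⟨j-1, by omega⟩ : Fin n) 1 : Fin n → ℂ)
        + (-γ (j-1)) • (Pi.single (⟨j, hjn⟩ : Fin n) 1 : Fin n → ℂ) := by
  apply col2 _ _ _ _ (by simp [Fin.ext_iff]; omega)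
  intro i
  show Ment γ i j = _
  rw [M_even γ j hj hj0 i]
  simp [Fin.ext_iff]

lemma LHcol_even (j : ℕ) (hj : j % 2 = 0) (h1 : j + 1 < n) :
    (Lmf γ n)ᴴ *ᵥ Pi.single (⟨j, by omega⟩ : Fin n) 1
      = γ j • (Pi.single (⟨j, by omega⟩ : Fin n) 1 : Fin n → ℂ)
        + tauc (γ j) • (Pi.single (⟨j+1, h1⟩ : Fin n) 1 : Fin n → ℂ) := by
  apply col2 _ _ _ _ (by simp [Fin.ext_iff])
  intro i
  show (starRingEnd ℂ) (Lent γ j i) = _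
  rw [LH_even γ j hj i]
  simp [Fin.ext_iff]

lemma LHcol_even_last (hn : 0 < n) (hj : (n-1) % 2 = 0) :
    (Lmf γ n)ᴴ *ᵥ Pi.single (⟨n-1, by omega⟩ : Fin n) 1
      = γ (n-1) • (Pi.single (⟨n-1, by omega⟩ : Fin n) 1 : Fin n → ℂ) := by
  apply col1
  intro i
  show (starRingEnd ℂ) (Lent γ (n-1) i) = _
  rw [LH_even γ (n-1) hj i]
  have h2 : ¬ ((i:ℕ) = n - 1 + 1) := by omega
  simp [Fin.ext_iff, h2]

lemma LHcol_odd (j : ℕ) (hj : j % 2 = 1) (hjn : j < n) :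
    (Lmf γ n)ᴴ *ᵥ Pi.single (⟨j, hjn⟩ : Fin n) 1
      = tauc (γ (j-1)) • (Pi.single (⟨j-1, by omega⟩ : Fin n) 1 : Fin n → ℂ)
        + (-(starRingEnd ℂ) (γ (j-1))) • (Pi.single (⟨j, hjn⟩ : Fin n) 1 : Fin n → ℂ) := by
  apply col2 _ _ _ _ (by simp [Fin.ext_iff]; omega)
  intro i
  show (starRingEnd ℂ) (Lent γ j i) = _
  rw [LH_odd γ j hj i]
  simp [Fin.ext_iff]

lemma MHcol_zero (hn : 0 < n) :
    (Mmf γ n)ᴴ *ᵥ Pi.single (⟨0, hn⟩ : Fin n) 1 = Pi.single (⟨0, hn⟩ : Fin n) 1 := by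
  have := col1 ((Mmf γ n)ᴴ) ⟨0, hn⟩ ⟨0, hn⟩ 1 ?_
  · simpa using this
  intro i
  show (starRingEnd ℂ) (Ment γ 0 i) = _
  rw [MH_zero γ i]
  simp [Fin.ext_iff]

lemma MHcol_odd (j : ℕ) (hj : j % 2 = 1) (h1 : j + 1 < n) :
    (Mmf γ n)ᴴ *ᵥ Pi.single (⟨j, by omega⟩ : Fin n) 1
      = γ j • (Pi.single (⟨j, by omega⟩ : Fin n) 1 : Fin n → ℂ)
        + tauc (γ j) • (Pi.single (⟨j+1, h1⟩ : Fin n) 1 : Fin n → ℂ) := by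
  apply col2 _ _ _ _ (by simp [Fin.ext_iff])
  intro i
  show (starRingEnd ℂ) (Ment γ j i) = _
  rw [MH_odd γ j hj i]
  simp [Fin.ext_iff]

lemma MHcol_odd_last (hn : 0 < n) (hj : (n-1) % 2 = 1) :
    (Mmf γ n)ᴴ *ᵥ Pi.single (⟨n-1, by omega⟩ : Fin n) 1
      = γ (n-1) • (Pi.single (⟨n-1, by omega⟩ : Fin n) 1 : Fin n → ℂ) := by
  apply col1
  intro i
  show (starRingEnd ℂ) (Ment γ (n-1) i) = _
  rw [MH_odd γ (n-1) hj i]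
  have h2 : ¬ ((i:ℕ) = n - 1 + 1) := by omega
  simp [Fin.ext_iff, h2]

lemma MHcol_even (j : ℕ) (hj : j % 2 = 0) (hj0 : j ≠ 0) (hjn : j < n) :
    (Mmf γ n)ᴴ *ᵥ Pi.single (⟨j, hjn⟩ : Fin n) 1
      = tauc (γ (j-1)) • (Pi.single (⟨j-1, by omega⟩ : Fin n) 1 : Fin n → ℂ)
        + (-(starRingEnd ℂ) (γ (j-1))) • (Pi.single (⟨j, hjn⟩ : Fin n) 1 : Fin n → ℂ) := by
  apply col2 _ _ _ _ (by simp [Fin.ext_iff]; omega)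
  intro i
  show (starRingEnd ℂ) (Ment γ j i) = _
  rw [MH_even γ j hj hj0 i]
  simp [Fin.ext_iff]

end

section
variable (γ : ℕ → ℂ) {n : ℕ}
open Matrix

lemma mulVec_ext (A B : Matrix (Fin n) (Fin n) ℂ)
    (h : ∀ j, A *ᵥ Pi.single j 1 = B *ᵥ Pi.single j 1) : A = B := by
  ext i j
  have := congrFun (h j) i
  simpa [Matrix.mulVec_single] using this

lemma normone (z : ℂ) (h : ‖z‖ = 1) : (starRingEnd ℂ) z * z = 1 := by
  rw [mul_comm, Complex.mul_conj]
  norm_cast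
  rw [Complex.normSq_eq_norm_sq, h]; norm_num

lemma LHL (hγle : ∀ k < n, ‖γ k‖ ≤ 1) (hlast : ‖γ (n-1)‖ = 1) :
    (Lmf γ n)ᴴ * Lmf γ n = 1 := by
  apply mulVec_ext
  rintro ⟨j, hjn⟩
  rw [← Matrix.mulVec_mulVec, Matrix.one_mulVec]
  rcases Nat.mod_two_eq_zero_or_one j with hj | hj
  · by_cases h1 : j + 1 < n
    · have ht := tauc_sq (γ j) (hγle j (by omega))
      rw [Lcol_even γ j hj h1, mulVec_add, mulVec_smul, mulVec_smul,
        LHcol_even γ j hj h1, LHcol_odd γ (j+1) (by omega) h1]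
      funext i
      simp only [Pi.add_apply, Pi.smul_apply, Pi.single_apply, smul_eq_mul, Fin.ext_iff]
      split_ifs <;> (try (exfalso; omega)) <;>
        simp only [Nat.add_sub_cancel, mul_one, mul_zero, add_zero, zero_add, mul_neg,
          neg_mul] <;> (try rfl) <;> (try ring1) <;> linear_combination ht
    · have hj1 : j = n - 1 := by omega
      subst hj1
      have hne := normone (γ (n-1)) hlast
      rw [Lcol_even_last γ (by omega) hj, mulVec_smul, LHcol_even_last γ (by omega) hj]
      funext i
      simp only [Pi.smul_apply, Pi.single_apply, smul_eq_mul]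
      split_ifs <;> simp [hne]
  · have ht := tauc_sq (γ (j-1)) (hγle (j-1) (by omega))
    rw [Lcol_odd γ j hj hjn, mulVec_add, mulVec_smul, mulVec_smul,
      LHcol_even γ (j-1) (by omega) (by omega), LHcol_odd γ j hj hjn]
    funext i
    simp only [Pi.add_apply, Pi.smul_apply, Pi.single_apply, smul_eq_mul, Fin.ext_iff]
    split_ifs <;> (try (exfalso; omega)) <;>
      simp only [Nat.add_sub_cancel, mul_one, mul_zero, add_zero, zero_add, mul_neg,
        neg_mul] <;> (try rfl) <;> (try ring1) <;> linear_combination ht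


lemma MHM (hγle : ∀ k < n, ‖γ k‖ ≤ 1) (hlast : ‖γ (n-1)‖ = 1) :
    (Mmf γ n)ᴴ * Mmf γ n = 1 := by
  apply mulVec_ext
  rintro ⟨j, hjn⟩
  rw [← Matrix.mulVec_mulVec, Matrix.one_mulVec]
  rcases Nat.eq_zero_or_pos j with hj0 | hj0
  · subst hj0
    rw [Mcol_zero γ (by omega), MHcol_zero γ (by omega)]
  rcases Nat.mod_two_eq_zero_or_one j with hj | hj
  · have ht := tauc_sq (γ (j-1)) (hγle (j-1) (by omega))
    rw [Mcol_even γ j hj (by omega) hjn, mulVec_add, mulVec_smul, mulVec_smul,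
      MHcol_odd γ (j-1) (by omega) (by omega : j - 1 + 1 < n), MHcol_even γ j hj (by omega) hjn]
    funext i
    simp only [Pi.add_apply, Pi.smul_apply, Pi.single_apply, smul_eq_mul, Fin.ext_iff]
    split_ifs <;> (try (exfalso; omega)) <;>
      simp only [Nat.add_sub_cancel, mul_one, mul_zero, add_zero, zero_add, mul_neg,
        neg_mul, neg_neg] <;> (try rfl) <;> (try ring1) <;> linear_combination ht
  · by_cases h1 : j + 1 < n
    · have ht := tauc_sq (γ j) (hγle j (by omega))
      rw [Mcol_odd γ j hj h1, mulVec_add, mulVec_smul, mulVec_smul,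
        MHcol_odd γ j hj h1, MHcol_even γ (j+1) (by omega) (by omega) h1]
      funext i
      simp only [Pi.add_apply, Pi.smul_apply, Pi.single_apply, smul_eq_mul, Fin.ext_iff]
      split_ifs <;> (try (exfalso; omega)) <;>
        simp only [Nat.add_sub_cancel, mul_one, mul_zero, add_zero, zero_add, mul_neg,
          neg_mul, neg_neg] <;> (try rfl) <;> (try ring1) <;> linear_combination ht
    · have hj1 : j = n - 1 := by omega
      subst hj1
      have hne := normone (γ (n-1)) hlast
      rw [Mcol_odd_last γ (by omega) hj, mulVec_smul, MHcol_odd_last γ (by omega) hj]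
      funext i
      simp only [Pi.smul_apply, Pi.single_apply, smul_eq_mul]
      split_ifs <;> simp [hne]

end

/-- The `n × n` finite CMV matrix: the product of the upper-left `n × n` blocks of
`L` and `M`; when `|γ_{n-1}| = 1` this is the upper-left `n × n` block of the
semi-infinite product `L·M`. -/
noncomputable def CMVfin (γ : ℕ → ℂ) (n : ℕ) : Matrix (Fin n) (Fin n) ℂ :=
  (Matrix.of fun i j : Fin n => Lent γ i j) * (Matrix.of fun i j : Fin n => Ment γ i j)

open Matrix in
lemma CMV_unitary (γ : ℕ → ℂ) {n : ℕ} (hγle : ∀ k < n, ‖γ k‖ ≤ 1)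
    (hlast : ‖γ (n-1)‖ = 1) :
    (CMVfin γ n)ᴴ * CMVfin γ n = 1 := by
  have h : CMVfin γ n = Lmf γ n * Mmf γ n := rfl
  rw [h, conjTranspose_mul, Matrix.mul_assoc, ← Matrix.mul_assoc (Lmf γ n)ᴴ,
    LHL γ hγle hlast, Matrix.one_mul, MHM γ hγle hlast]

open Matrix in
/-- **Proposition 3.1**, finite case. If `γ_0, …, γ_{n-2} ∈ 𝔻` and `γ_{n-1} ∈ ∂𝔻`,
then `δ₀` is a cyclic vector for the finite CMV matrix `C_n(γ_0, …, γ_{n-1})`. -/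
theorem cmvFin_delta0_cyclic
    (n : ℕ) (hn : 1 ≤ n) (γ : ℕ → ℂ)
    (hγ : ∀ k < n - 1, ‖γ k‖ < 1)
    (hlast : ‖γ (n - 1)‖ = 1) :
    Submodule.span ℂ {x : Fin n → ℂ | ∃ k : ℕ,
      x = ((CMVfin γ n) ^ k).mulVec (Pi.single (⟨0, hn⟩ : Fin n) 1)} = ⊤ := by
  classical
  have hγle : ∀ k < n, ‖γ k‖ ≤ 1 := by
    intro k hk
    rcases Nat.lt_or_ge k (n-1) with h | h
    · exact (hγ k h).le
    · have hk1 : k = n - 1 := by omega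
      rw [hk1, hlast]
  set V := Submodule.span ℂ {x : Fin n → ℂ | ∃ k : ℕ,
      x = ((CMVfin γ n) ^ k).mulVec (Pi.single (⟨0, hn⟩ : Fin n) 1)} with hVdef
  have h0 : Pi.single (⟨0, hn⟩ : Fin n) 1 ∈ V :=
    Submodule.subset_span ⟨0, by rw [pow_zero, Matrix.one_mulVec]⟩
  have hC : ∀ v ∈ V, (CMVfin γ n) *ᵥ v ∈ V := by
    intro v hv
    have hmap : Submodule.map (Matrix.mulVecLin (CMVfin γ n)) V ≤ V := by
      rw [hVdef, Submodule.map_span, Submodule.span_le]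
      rintro x ⟨y, ⟨k, rfl⟩, rfl⟩
      apply Submodule.subset_span
      refine ⟨k+1, ?_⟩
      rw [Matrix.mulVecLin_apply, Matrix.mulVec_mulVec, ← pow_succ']
    exact hmap ⟨v, hv, rfl⟩
  have hU : (CMVfin γ n)ᴴ * CMVfin γ n = 1 := CMV_unitary γ hγle hlast
  have hCH : ∀ v ∈ V, (CMVfin γ n)ᴴ *ᵥ v ∈ V := by
    intro v hv
    have hres : ∀ x ∈ V, Matrix.mulVecLin (CMVfin γ n) x ∈ V := fun x hx => hC x hx
    let f : V →ₗ[ℂ] V := LinearMap.restrict (Matrix.mulVecLin (CMVfin γ n)) hres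
    have hinj : Function.Injective f := by
      intro a b hab
      have h1 : (CMVfin γ n) *ᵥ (a : Fin n → ℂ) = (CMVfin γ n) *ᵥ (b : Fin n → ℂ) := by
        have := congrArg Subtype.val hab
        simpa [f, LinearMap.restrict_apply, Matrix.mulVecLin_apply] using this
      have ha : (CMVfin γ n)ᴴ *ᵥ ((CMVfin γ n) *ᵥ (a : Fin n → ℂ)) = (a : Fin n → ℂ) := by
        rw [Matrix.mulVec_mulVec, hU, Matrix.one_mulVec]
      have hb : (CMVfin γ n)ᴴ *ᵥ ((CMVfin γ n) *ᵥ (b : Fin n → ℂ)) = (b : Fin n → ℂ) := by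
        rw [Matrix.mulVec_mulVec, hU, Matrix.one_mulVec]
      apply Subtype.ext
      rw [← ha, ← hb, h1]
    have hsurj := (LinearMap.injective_iff_surjective).mp hinj
    obtain ⟨⟨w, hw⟩, hfw⟩ := hsurj ⟨v, hv⟩
    have hwv : (CMVfin γ n) *ᵥ w = v := by
      have := congrArg Subtype.val hfw
      simpa [f, LinearMap.restrict_apply, Matrix.mulVecLin_apply] using this
    have hfin : (CMVfin γ n)ᴴ *ᵥ v = w := by
      rw [← hwv, Matrix.mulVec_mulVec, hU, Matrix.one_mulVec]
    rw [hfin]; exact hw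
  have hex : ∀ (c : ℂ) (w x y z v : Fin n → ℂ), c ≠ 0 → v ∈ V → x ∈ V → y ∈ V → z ∈ V →
      v = x + y + z + c • w → w ∈ V := by
    intro c w x y z v hc hv hx hy hz heq
    have h2 : v - x - y - z = c • w := by rw [heq]; abel
    have h1 : w = c⁻¹ • (v - x - y - z) := by
      rw [h2, smul_smul, inv_mul_cancel₀ hc, one_smul]
    rw [h1]
    exact V.smul_mem _ (V.sub_mem (V.sub_mem (V.sub_mem hv hx) hy) hz)
  have hLM : CMVfin γ n = Lmf γ n * Mmf γ n := rfl
  have he : ∀ m, ∀ hm : m < n, Pi.single (⟨m, hm⟩ : Fin n) 1 ∈ V := by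
    intro m
    induction m using Nat.strong_induction_on with
    | _ m ih =>
      intro hm
      rcases m with _ | m1
      · exact h0
      rcases m1 with _ | k
      · -- m = 1
        have hτ : tauc (γ 0) ≠ 0 := tauc_ne _ (hγ 0 (by omega))
        have hv : (CMVfin γ n) *ᵥ Pi.single (⟨0, hn⟩ : Fin n) 1 ∈ V := hC _ h0
        have hcomp : (CMVfin γ n) *ᵥ Pi.single (⟨0, hn⟩ : Fin n) 1
            = (starRingEnd ℂ) (γ 0) • (Pi.single (⟨0, hn⟩ : Fin n) 1 : Fin n → ℂ)
              + tauc (γ 0) • (Pi.single (⟨1, hm⟩ : Fin n) 1 : Fin n → ℂ) := by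
          rw [hLM, ← Matrix.mulVec_mulVec, Mcol_zero γ (by omega), Lcol_even γ 0 rfl hm]
        refine hex (tauc (γ 0)) _ ((starRingEnd ℂ) (γ 0) • (Pi.single (⟨0, hn⟩ : Fin n) 1 : Fin n → ℂ)) 0 0 _
          hτ hv (V.smul_mem _ h0) V.zero_mem V.zero_mem ?_
        rw [hcomp]; abel
      · -- m = k + 2
        have hk2 : k + 2 < n := hm
        have ihk : Pi.single (⟨k, by omega⟩ : Fin n) 1 ∈ V := ih k (by omega) (by omega)
        have ihk1 : Pi.single (⟨k+1, by omega⟩ : Fin n) 1 ∈ V := ih (k+1) (by omega) (by omega)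
        have hτ1 : tauc (γ k) ≠ 0 := tauc_ne _ (hγ k (by omega))
        have hτ2 : tauc (γ (k+1)) ≠ 0 := tauc_ne _ (hγ (k+1) (by omega))
        rcases Nat.mod_two_eq_zero_or_one k with hk | hk
        · -- k even : use Cᴴ e_k
          have hv : (CMVfin γ n)ᴴ *ᵥ Pi.single (⟨k, by omega⟩ : Fin n) 1 ∈ V := hCH _ ihk
          have hstep1 : (CMVfin γ n)ᴴ *ᵥ Pi.single (⟨k, by omega⟩ : Fin n) 1
              = (Mmf γ n)ᴴ *ᵥ ((Lmf γ n)ᴴ *ᵥ Pi.single (⟨k, by omega⟩ : Fin n) 1) := by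
            rw [hLM, Matrix.conjTranspose_mul, ← Matrix.mulVec_mulVec]
          rcases Nat.eq_zero_or_pos k with hk0 | hk0
          · subst hk0
            have hcomp : (CMVfin γ n)ᴴ *ᵥ Pi.single (⟨0, by omega⟩ : Fin n) 1
                = γ 0 • (Pi.single (⟨0, by omega⟩ : Fin n) 1 : Fin n → ℂ)
                  + tauc (γ 0) • ((γ 1) • (Pi.single (⟨1, by omega⟩ : Fin n) 1 : Fin n → ℂ)
                    + tauc (γ 1) • (Pi.single (⟨2, by omega⟩ : Fin n) 1 : Fin n → ℂ)) := by
              rw [hstep1, LHcol_even γ 0 rfl (by omega), mulVec_add, mulVec_smul, mulVec_smul,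
                MHcol_zero γ (by omega), MHcol_odd γ 1 rfl (by omega)]
            refine hex (tauc (γ 0) * tauc (γ 1)) _
              (γ 0 • (Pi.single (⟨0, by omega⟩ : Fin n) 1 : Fin n → ℂ))
              ((tauc (γ 0) * γ 1) • (Pi.single (⟨1, by omega⟩ : Fin n) 1 : Fin n → ℂ)) 0 _
              (mul_ne_zero hτ1 hτ2) hv (V.smul_mem _ ihk) (V.smul_mem _ ihk1) V.zero_mem ?_
            rw [hcomp]
            match_scalars <;> ring
          · have ihkm : Pi.single (⟨k-1, by omega⟩ : Fin n) 1 ∈ V := ih (k-1) (by omega) (by omega)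
            have hcomp : (CMVfin γ n)ᴴ *ᵥ Pi.single (⟨k, by omega⟩ : Fin n) 1
                = γ k • (tauc (γ (k-1)) • (Pi.single (⟨k-1, by omega⟩ : Fin n) 1 : Fin n → ℂ)
                    + (-(starRingEnd ℂ) (γ (k-1))) • (Pi.single (⟨k, by omega⟩ : Fin n) 1 : Fin n → ℂ))
                  + tauc (γ k) • ((γ (k+1)) • (Pi.single (⟨k+1, by omega⟩ : Fin n) 1 : Fin n → ℂ)
                    + tauc (γ (k+1)) • (Pi.single (⟨k+2, by omega⟩ : Fin n) 1 : Fin n → ℂ)) := by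
              rw [hstep1, LHcol_even γ k hk (by omega), mulVec_add, mulVec_smul, mulVec_smul,
                MHcol_even γ k hk (by omega) (by omega), MHcol_odd γ (k+1) (by omega) (by omega)]
            refine hex (tauc (γ k) * tauc (γ (k+1))) _
              ((γ k * tauc (γ (k-1))) • (Pi.single (⟨k-1, by omega⟩ : Fin n) 1 : Fin n → ℂ))
              ((γ k * (-(starRingEnd ℂ) (γ (k-1)))) • (Pi.single (⟨k, by omega⟩ : Fin n) 1 : Fin n → ℂ))
              ((tauc (γ k) * γ (k+1)) • (Pi.single (⟨k+1, by omega⟩ : Fin n) 1 : Fin n → ℂ)) _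
              (mul_ne_zero hτ1 hτ2) hv (V.smul_mem _ ihkm) (V.smul_mem _ ihk)
              (V.smul_mem _ ihk1) ?_
            rw [hcomp]
            match_scalars <;> ring
        · -- k odd : use C e_k
          have hv : (CMVfin γ n) *ᵥ Pi.single (⟨k, by omega⟩ : Fin n) 1 ∈ V := hC _ ihk
          have ihkm : Pi.single (⟨k-1, by omega⟩ : Fin n) 1 ∈ V := ih (k-1) (by omega) (by omega)
          have hcomp : (CMVfin γ n) *ᵥ Pi.single (⟨k, by omega⟩ : Fin n) 1
              = (starRingEnd ℂ) (γ k) • (tauc (γ (k-1)) • (Pi.single (⟨k-1, by omega⟩ : Fin n) 1 : Fin n → ℂ)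
                  + (-γ (k-1)) • (Pi.single (⟨k, by omega⟩ : Fin n) 1 : Fin n → ℂ))
                + tauc (γ k) • ((starRingEnd ℂ) (γ (k+1)) • (Pi.single (⟨k+1, by omega⟩ : Fin n) 1 : Fin n → ℂ)
                  + tauc (γ (k+1)) • (Pi.single (⟨k+2, by omega⟩ : Fin n) 1 : Fin n → ℂ)) := by
            rw [hLM, ← Matrix.mulVec_mulVec, Mcol_odd γ k hk (by omega), mulVec_add,
              mulVec_smul, mulVec_smul, Lcol_odd γ k hk (by omega),
              Lcol_even γ (k+1) (by omega) (by omega)]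
          refine hex (tauc (γ k) * tauc (γ (k+1))) _
            (((starRingEnd ℂ) (γ k) * tauc (γ (k-1))) • (Pi.single (⟨k-1, by omega⟩ : Fin n) 1 : Fin n → ℂ))
            (((starRingEnd ℂ) (γ k) * (-γ (k-1))) • (Pi.single (⟨k, by omega⟩ : Fin n) 1 : Fin n → ℂ))
            ((tauc (γ k) * (starRingEnd ℂ) (γ (k+1))) • (Pi.single (⟨k+1, by omega⟩ : Fin n) 1 : Fin n → ℂ)) _
            (mul_ne_zero hτ1 hτ2) hv (V.smul_mem _ ihkm) (V.smul_mem _ ihk)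
            (V.smul_mem _ ihk1) ?_
          rw [hcomp]
          match_scalars <;> ring
  apply le_antisymm le_top
  rw [← (Pi.basisFun ℂ (Fin n)).span_eq, Submodule.span_le]
  rintro x ⟨i, rfl⟩
  rw [Pi.basisFun_apply]
  obtain ⟨m, hmn⟩ := i
  exact he m hmn
end
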